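/- arXiv:1210.2881 — 5 statements merged into one kernel-verified Lean document; each statement's English description precedes it below -/
import Mathlib

section
/- The Lebesgue measure of the gauge ball of radius ε in ℝ^{2n+1} equals |B(0,ε)| = ε^{2n+2} · (ω(2n)/n) · ∫₀¹ (1−s²)^{n/2} ds, where ω(2n) is the surface area of the unit sphere in ℝ^{2n}. -/
open MeasureTheory Filter Topology

noncomputable section

/-- Points of the Heisenberg group `ℍⁿ = ℝⁿ × ℝⁿ × ℝ`. -/
abbrev Heis (n : ℕ) := (Fin n → ℝ) × (Fin n → ℝ) × ℝ

/-- Heisenberg group product. -/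
def hMul {n : ℕ} (P Q : Heis n) : Heis n :=
  (P.1 + Q.1, P.2.1 + Q.2.1,
    P.2.2 + Q.2.2 + 2 * ((∑ i, Q.1 i * P.2.1 i) - ∑ i, P.1 i * Q.2.1 i))

/-- Group inverse. -/
def hInv {n : ℕ} (P : Heis n) : Heis n := (-P.1, -P.2.1, -P.2.2)

/-- Group identity. -/
def hOne {n : ℕ} : Heis n := (0, 0, 0)

/-- Anisotropic dilation `δ_r(x,y,t) = (rx, ry, r²t)`. -/
def hDil {n : ℕ} (r : ℝ) (P : Heis n) : Heis n := (r • P.1, r • P.2.1, r ^ 2 * P.2.2)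

/-- Homogeneous gauge `‖(x,y,t)‖ = ((|x|²+|y|²)² + t²)^{1/4}`. -/
def hGauge {n : ℕ} (P : Heis n) : ℝ :=
  (((∑ i, (P.1 i) ^ 2) + ∑ i, (P.2.1 i) ^ 2) ^ 2 + (P.2.2) ^ 2) ^ ((1 : ℝ) / 4)

/-- Gauge ball of radius `ε` centred at `P`. -/
def hBall {n : ℕ} (P : Heis n) (ε : ℝ) : Set (Heis n) :=
  {Q | hGauge (hMul (hInv P) Q) < ε}

/-- Closed gauge ball of radius `ε` centred at `P`. -/
def hClosedBall {n : ℕ} (P : Heis n) (ε : ℝ) : Set (Heis n) :=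
  {Q | hGauge (hMul (hInv P) Q) ≤ ε}

/-- Horizontal derivative `X_i u = ∂_{x_i} u + 2 y_i ∂_t u`. -/
def Xd {n : ℕ} (i : Fin n) (u : Heis n → ℝ) (P : Heis n) : ℝ :=
  fderiv ℝ u P ((Pi.single i 1 : Fin n → ℝ), (0 : Fin n → ℝ), 2 * P.2.1 i)

/-- Horizontal derivative `Y_i u = ∂_{y_i} u − 2 x_i ∂_t u`. -/
def Yd {n : ℕ} (i : Fin n) (u : Heis n → ℝ) (P : Heis n) : ℝ :=
  fderiv ℝ u P ((0 : Fin n → ℝ), (Pi.single i 1 : Fin n → ℝ), -(2 * P.1 i))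

/-- Vertical derivative `∂_t u`. -/
def Td {n : ℕ} (u : Heis n → ℝ) (P : Heis n) : ℝ :=
  fderiv ℝ u P ((0 : Fin n → ℝ), (0 : Fin n → ℝ), (1 : ℝ))

/-- Norm of the horizontal gradient. -/
def hGradNorm {n : ℕ} (u : Heis n → ℝ) (P : Heis n) : ℝ :=
  Real.sqrt ((∑ i, (Xd i u P) ^ 2) + ∑ i, (Yd i u P) ^ 2)

/-- Horizontal (Kohn) Laplacian `Δ_ℍ u = Σᵢ (X_i² u + Y_i² u)`. -/
def hLap {n : ℕ} (u : Heis n → ℝ) (P : Heis n) : ℝ :=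
  (∑ i, Xd i (Xd i u) P) + ∑ i, Yd i (Yd i u) P

/-- Quadratic form of the (symmetrized) horizontal Hessian evaluated at a horizontal
vector `(v, w)` — the quadratic form of the symmetrized matrix agrees with that of the
raw second-derivative matrix. -/
def hQuad {n : ℕ} (u : Heis n → ℝ) (P : Heis n) (v w : Fin n → ℝ) : ℝ :=
  ∑ i, ∑ j,
    (v i * v j * Xd i (Xd j u) P + v i * w j * Xd i (Yd j u) P +
      w i * v j * Yd i (Xd j u) P + w i * w j * Yd i (Yd j u) P)


section VolumeGaugeBallAux

open Real intervalIntegral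

lemma Jrec (m : ℕ) :
    (∫ x in (0:ℝ)..(π/2), Real.sin x ^ (m+2)) =
      ((m:ℝ)+1)/((m:ℝ)+2) * ∫ x in (0:ℝ)..(π/2), Real.sin x ^ m := by
  have h := integral_sin_pow (a := 0) (b := π/2) m
  simpa using h

lemma cos_int_eq_sin_int (k : ℕ) :
    (∫ x in (0:ℝ)..(π/2), Real.cos x ^ k) = ∫ x in (0:ℝ)..(π/2), Real.sin x ^ k := by
  have h := intervalIntegral.integral_comp_sub_left (a := (0:ℝ)) (b := π/2)
    (fun x => Real.cos x ^ k) (π/2)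
  simp only [Real.cos_pi_div_two_sub, sub_self, sub_zero] at h
  rw [← h]

lemma scalar_identity (m : ℕ) :
    (∫ s in (0:ℝ)..1, s ^ (2*m+1) * (2 * Real.sqrt (1 - s^4))) =
      (1/((m:ℝ)+1)) * ∫ s in (0:ℝ)..1, (1 - s^2) ^ (((m:ℝ)+1)/2) := by
  have hg1 : Continuous fun u : ℝ => u ^ m * Real.sqrt (1 - u^2) := by fun_prop
  -- Step 1 : substitute u = s^2
  have step1 : (∫ s in (0:ℝ)..1, s ^ (2*m+1) * (2 * Real.sqrt (1 - s^4))) =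
      ∫ u in (0:ℝ)..1, u ^ m * Real.sqrt (1 - u^2) := by
    have h := intervalIntegral.integral_comp_mul_deriv (a := (0:ℝ)) (b := 1)
      (f := fun s => s^2) (f' := fun s => 2*s)
      (g := fun u => u ^ m * Real.sqrt (1 - u^2))
      (fun x _ => by simpa [mul_comm] using (hasDerivAt_pow 2 x)) (by fun_prop) hg1
    norm_num [Function.comp] at h
    rw [← h]
    · apply intervalIntegral.integral_congr
      intro x _
      have h4 : (x^2)^2 = x^4 := by ring
      simp only [h4]
      ring
  -- Step 2 : substitute u = sin x
  have step2 : (∫ u in (0:ℝ)..1, u ^ m * Real.sqrt (1 - u^2)) =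
      ∫ x in (0:ℝ)..(π/2), Real.sin x ^ m * Real.cos x ^ 2 := by
    have h := intervalIntegral.integral_comp_mul_deriv (a := (0:ℝ)) (b := π/2)
      (f := Real.sin) (f' := Real.cos)
      (g := fun u => u ^ m * Real.sqrt (1 - u^2))
      (fun x _ => Real.hasDerivAt_sin x) Real.continuousOn_cos hg1
    rw [Real.sin_zero, Real.sin_pi_div_two] at h
    rw [← h]
    apply intervalIntegral.integral_congr
    intro x hx
    rw [Set.uIcc_of_le (by positivity : (0:ℝ) ≤ π/2)] at hx
    have hc : 0 ≤ Real.cos x := Real.cos_nonneg_of_mem_Icc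
      ⟨by linarith [hx.1, Real.pi_pos], hx.2⟩
    have : 1 - Real.sin x ^ 2 = Real.cos x ^ 2 := by
      nlinarith [Real.sin_sq_add_cos_sq x]
    simp only [Function.comp]
    rw [this, Real.sqrt_sq hc]
    ring
  -- Step 3 : the RHS integral equals ∫ cos ^ (m+2)
  have step3 : (∫ s in (0:ℝ)..1, (1 - s^2) ^ (((m:ℝ)+1)/2)) =
      ∫ x in (0:ℝ)..(π/2), Real.sin x ^ (m+2) := by
    have hg2 : Continuous fun u : ℝ => (1 - u^2) ^ (((m:ℝ)+1)/2) := by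
      apply Continuous.rpow_const (by fun_prop)
      intro x; right; positivity
    have h := intervalIntegral.integral_comp_mul_deriv (a := (0:ℝ)) (b := π/2)
      (f := Real.sin) (f' := Real.cos)
      (g := fun u => (1 - u^2) ^ (((m:ℝ)+1)/2))
      (fun x _ => Real.hasDerivAt_sin x) Real.continuousOn_cos hg2
    rw [Real.sin_zero, Real.sin_pi_div_two] at h
    rw [← h, ← cos_int_eq_sin_int (m+2)]
    apply intervalIntegral.integral_congr
    intro x hx
    rw [Set.uIcc_of_le (by positivity : (0:ℝ) ≤ π/2)] at hx
    have hc : 0 ≤ Real.cos x := Real.cos_nonneg_of_mem_Icc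
      ⟨by linarith [hx.1, Real.pi_pos], hx.2⟩
    have h1 : 1 - Real.sin x ^ 2 = Real.cos x ^ 2 := by
      nlinarith [Real.sin_sq_add_cos_sq x]
    simp only [Function.comp]
    rw [h1]
    have : (Real.cos x ^ 2 : ℝ) ^ (((m:ℝ)+1)/2) = Real.cos x ^ ((m:ℕ)+1) := by
      rw [← Real.rpow_natCast (Real.cos x) 2, ← Real.rpow_mul hc, ← Real.rpow_natCast (Real.cos x) (m+1)]
      congr 1
      push_cast
      ring
    rw [this]
    ring
  rw [step1, step2, step3, Jrec m]
  have hsub : (∫ x in (0:ℝ)..(π/2), Real.sin x ^ m * Real.cos x ^ 2) =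
      (∫ x in (0:ℝ)..(π/2), Real.sin x ^ m) - ∫ x in (0:ℝ)..(π/2), Real.sin x ^ (m+2) := by
    rw [← intervalIntegral.integral_sub (by apply Continuous.intervalIntegrable; fun_prop)
      (by apply Continuous.intervalIntegrable; fun_prop)]
    apply intervalIntegral.integral_congr
    intro x _
    simp only
    have h1 : Real.cos x ^ 2 = 1 - Real.sin x ^ 2 := by nlinarith [Real.sin_sq_add_cos_sq x]
    rw [h1]; ring
  rw [hsub, Jrec m]
  have hm2 : ((m:ℝ)+2) ≠ 0 := by positivity
  have hm1 : ((m:ℝ)+1) ≠ 0 := by positivity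
  field_simp
  ring


def σe (n : ℕ) : Fin n ⊕ Fin n ≃ Fin (2*n) := finSumFinEquiv.trans (finCongr (two_mul n).symm)

def toHeisFun (n : ℕ) : EuclideanSpace ℝ (Fin (2*n)) × ℝ → Heis n :=
  ⇑(MeasurableEquiv.prodAssoc : ((Fin n → ℝ) × (Fin n → ℝ)) × ℝ ≃ᵐ Heis n) ∘
    Prod.map
      (⇑(MeasurableEquiv.sumPiEquivProdPi (fun _ : Fin n ⊕ Fin n => ℝ)) ∘
        ⇑(MeasurableEquiv.piCongrLeft (fun _ : Fin (2*n) => ℝ) (σe n)).symm ∘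
        ⇑(MeasurableEquiv.toLp 2 (Fin (2*n) → ℝ)).symm)
      (id : ℝ → ℝ)

lemma toHeisFun_measurePreserving (n : ℕ) :
    MeasurePreserving (toHeisFun n) volume volume := by
  have h1 : MeasurePreserving
      (⇑(MeasurableEquiv.sumPiEquivProdPi (fun _ : Fin n ⊕ Fin n => ℝ)) ∘
        ⇑(MeasurableEquiv.piCongrLeft (fun _ : Fin (2*n) => ℝ) (σe n)).symm ∘
        ⇑(MeasurableEquiv.toLp 2 (Fin (2*n) → ℝ)).symm) volume volume :=
    (volume_measurePreserving_sumPiEquivProdPi _).comp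
      (((volume_measurePreserving_piCongrLeft (fun _ : Fin (2*n) => ℝ) (σe n)).symm _).comp
        (EuclideanSpace.volume_preserving_symm_measurableEquiv_toLp (Fin (2*n))))
  have h2 : MeasurePreserving (Prod.map (⇑(MeasurableEquiv.sumPiEquivProdPi (fun _ : Fin n ⊕ Fin n => ℝ)) ∘
        ⇑(MeasurableEquiv.piCongrLeft (fun _ : Fin (2*n) => ℝ) (σe n)).symm ∘
        ⇑(MeasurableEquiv.toLp 2 (Fin (2*n) → ℝ)).symm) (id : ℝ → ℝ)) volume volume :=
    h1.prod (MeasurePreserving.id volume)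
  exact (volume_preserving_prodAssoc).comp h2

lemma toHeisFun_preimage (n : ℕ) (c : ℝ) :
    toHeisFun n ⁻¹' {P : Heis n | ((∑ i, P.1 i ^ 2) + ∑ i, P.2.1 i ^ 2) ^ 2 + P.2.2 ^ 2 < c}
      = {p : EuclideanSpace ℝ (Fin (2*n)) × ℝ | (∑ k, p.1 k ^ 2) ^ 2 + p.2 ^ 2 < c} := by
  ext ⟨z, t⟩
  simp only [Set.mem_preimage, Set.mem_setOf_eq]
  have h1 : (toHeisFun n (z, t)).1 = fun i => z (σe n (Sum.inl i)) := rfl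
  have h2 : (toHeisFun n (z, t)).2.1 = fun i => z (σe n (Sum.inr i)) := rfl
  have h3 : (toHeisFun n (z, t)).2.2 = t := rfl
  rw [h1, h2, h3]
  have hsum : (∑ i : Fin n, z (σe n (Sum.inl i)) ^ 2) + ∑ i : Fin n, z (σe n (Sum.inr i)) ^ 2
      = ∑ k, z k ^ 2 := by
    rw [← Fintype.sum_sum_type (f := fun j : Fin n ⊕ Fin n => z (σe n j) ^ 2)]
    exact Equiv.sum_comp (σe n) fun k => z k ^ 2
  rw [hsum]

end VolumeGaugeBallAux

/-- Lebesgue measure of the gauge ball of radius `ε`: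
`|B(0,ε)| = ε^{2n+2} (ω(2n)/n) ∫₀¹ (1−s²)^{n/2} ds`, where `ω(2n)` is the surface
area of the unit sphere in `ℝ^{2n}` (equal to `2n` times the volume of the unit ball). -/
theorem volume_gauge_ball (n : ℕ) (hn : 1 ≤ n) (ε : ℝ) (hε : 0 < ε) :
    (volume (hBall (hOne : Heis n) ε)).toReal =
      ε ^ (2 * n + 2) *
        ((2 * n * (volume (Metric.ball (0 : EuclideanSpace ℝ (Fin (2 * n))) 1)).toReal) / n) *
        ∫ s in (0:ℝ)..1, (1 - s ^ 2) ^ ((n : ℝ) / 2) := by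
  set E := EuclideanSpace ℝ (Fin (2 * n)) with hE
  -- Step 1: rewrite the ball
  have hball_eq : hBall (hOne : Heis n) ε =
      {P : Heis n | ((∑ i, P.1 i ^ 2) + ∑ i, P.2.1 i ^ 2) ^ 2 + P.2.2 ^ 2 < ε ^ 4} := by
    ext P
    have h0 : hMul (hInv hOne) P = P := by
      simp [hMul, hInv, hOne]
    simp only [hBall, Set.mem_setOf_eq, h0, hGauge]
    set A := ((∑ i, P.1 i ^ 2) + ∑ i, P.2.1 i ^ 2) ^ 2 + P.2.2 ^ 2 with hA
    have hA0 : 0 ≤ A := by positivity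
    have h14 : ((1:ℝ)/4) = (((4:ℕ):ℝ))⁻¹ := by norm_num
    constructor
    · intro h
      have h4 : (A ^ ((1:ℝ)/4)) ^ (4:ℕ) < ε ^ (4:ℕ) :=
        pow_lt_pow_left₀ h (Real.rpow_nonneg hA0 _) (by norm_num)
      rwa [h14, Real.rpow_inv_natCast_pow hA0 (by norm_num)] at h4
    · intro h
      have h4 : A ^ ((1:ℝ)/4) < (ε ^ (4:ℕ)) ^ ((1:ℝ)/4) :=
        Real.rpow_lt_rpow hA0 h (by norm_num)
      rw [h14] at h4 ⊢
      rwa [Real.pow_rpow_inv_natCast hε.le (by norm_num)] at h4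
  -- Step 2: measurability
  have hcont : Continuous fun P : Heis n =>
      ((∑ i, P.1 i ^ 2) + ∑ i, P.2.1 i ^ 2) ^ 2 + P.2.2 ^ 2 := by fun_prop
  have hmeasH : MeasurableSet
      {P : Heis n | ((∑ i, P.1 i ^ 2) + ∑ i, P.2.1 i ^ 2) ^ 2 + P.2.2 ^ 2 < ε ^ 4} :=
    (isOpen_lt hcont continuous_const).measurableSet
  have hcont2 : Continuous fun p : E × ℝ => (∑ k, p.1 k ^ 2) ^ 2 + p.2 ^ 2 := by
    apply Continuous.add ?_ (by fun_prop)
    apply Continuous.pow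
    apply continuous_finset_sum
    intro k _
    exact ((EuclideanSpace.proj k).continuous.comp continuous_fst).pow 2
  have hmeasE : MeasurableSet {p : E × ℝ | (∑ k, p.1 k ^ 2) ^ 2 + p.2 ^ 2 < ε ^ 4} :=
    (isOpen_lt hcont2 continuous_const).measurableSet
  -- Step 3: transfer to E × ℝ
  have hvol1 : volume (hBall (hOne : Heis n) ε) =
      volume {p : E × ℝ | (∑ k, p.1 k ^ 2) ^ 2 + p.2 ^ 2 < ε ^ 4} := by
    rw [hball_eq, ← (toHeisFun_measurePreserving n).measure_preimage hmeasH.nullMeasurableSet,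
      toHeisFun_preimage]
  -- the radial profile function
  set g : E → ℝ := fun z => 2 * Real.sqrt (ε ^ 4 - ‖z‖ ^ 4) with hg
  have hnormsq : ∀ z : E, ∑ k, z k ^ 2 = ‖z‖ ^ 2 := by
    intro z
    rw [EuclideanSpace.norm_eq, Real.sq_sqrt (by positivity)]
    congr 1; ext k; rw [Real.norm_eq_abs, sq_abs]
  -- Step 4: Fubini
  have hvol2 : volume {p : E × ℝ | (∑ k, p.1 k ^ 2) ^ 2 + p.2 ^ 2 < ε ^ 4} =
      ∫⁻ z : E, ENNReal.ofReal (g z) := by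
    rw [Measure.volume_eq_prod, Measure.prod_apply hmeasE]
    apply lintegral_congr
    intro z
    have hsec : (Prod.mk z ⁻¹' {p : E × ℝ | (∑ k, p.1 k ^ 2) ^ 2 + p.2 ^ 2 < ε ^ 4}) =
        Set.Ioo (-(Real.sqrt (ε ^ 4 - ‖z‖ ^ 4))) (Real.sqrt (ε ^ 4 - ‖z‖ ^ 4)) := by
      ext t
      simp only [Set.mem_preimage, Set.mem_setOf_eq, Set.mem_Ioo, hnormsq z]
      rw [← abs_lt, Real.lt_sqrt (abs_nonneg t), sq_abs]
      constructor <;> intro h <;> nlinarith [sq_nonneg t, sq_nonneg (‖z‖^2)]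
    rw [hsec, Real.volume_Ioo]
    congr 1
    rw [hg]
    ring
  -- Step 5: lintegral to integral
  have hg_cont : Continuous g := by
    apply continuous_const.mul
    apply Real.continuous_sqrt.comp
    apply continuous_const.sub
    exact (continuous_norm.pow 4)
  have hg_nonneg : ∀ z, 0 ≤ g z := fun z => by positivity
  have hg_supp : HasCompactSupport g := by
    apply HasCompactSupport.intro (isCompact_closedBall (0:E) ε)
    intro z hz
    simp only [Metric.mem_closedBall, dist_zero_right, not_le] at hz
    have h4 : ε ^ 4 < ‖z‖ ^ 4 := pow_lt_pow_left₀ hz hε.le (by norm_num)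
    have : ε ^ 4 - ‖z‖ ^ 4 ≤ 0 := by linarith
    simp [hg, Real.sqrt_eq_zero_of_nonpos this]
  have hg_int : Integrable g := hg_cont.integrable_of_hasCompactSupport hg_supp
  have hvol3 : (∫⁻ z : E, ENNReal.ofReal (g z)) = ENNReal.ofReal (∫ z, g z) :=
    (ofReal_integral_eq_lintegral_ofReal hg_int (ae_of_all _ hg_nonneg)).symm
  -- Step 6: radial formula
  haveI : Nontrivial E := by
    have : Nonempty (Fin (2 * n)) := ⟨⟨0, by omega⟩⟩
    infer_instance
  have hdim : Module.finrank ℝ E = 2 * n := finrank_euclideanSpace_fin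
  have hrad : (∫ z, g z) = (2 * n) • (volume (Metric.ball (0:E) 1)).toReal •
      ∫ y in Set.Ioi (0:ℝ), y ^ (2 * n - 1) • (2 * Real.sqrt (ε ^ 4 - y ^ 4)) := by
    have := integral_fun_norm_addHaar (volume : Measure E)
      (fun y => 2 * Real.sqrt (ε ^ 4 - y ^ 4))
    rw [hdim] at this
    exact this
  obtain ⟨m, rfl⟩ : ∃ m, n = m + 1 := ⟨n - 1, by omega⟩
  set n := m + 1 with hn'
  -- Step 7: reduce the Ioi-integral to an interval integral over [0, ε]
  set h : ℝ → ℝ := fun y => y ^ (2 * n - 1) * (2 * Real.sqrt (ε ^ 4 - y ^ 4)) with hh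
  have hh_cont : Continuous h := by
    apply Continuous.mul (by fun_prop)
    apply Continuous.mul continuous_const
    exact Real.continuous_sqrt.comp (continuous_const.sub (by fun_prop))
  have hzero : ∀ y ∈ Set.Ioi ε, h y = 0 := by
    intro y hy
    have hy' : ε < y := hy
    have h4 : ε ^ 4 < y ^ 4 := pow_lt_pow_left₀ hy' hε.le (by norm_num)
    simp [hh, Real.sqrt_eq_zero_of_nonpos (by linarith : ε ^ 4 - y ^ 4 ≤ 0)]
  have hsplit : (∫ y in Set.Ioi (0:ℝ), h y) = ∫ y in (0:ℝ)..ε, h y := by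
    rw [← Set.Ioc_union_Ioi_eq_Ioi hε.le,
      setIntegral_union (Set.Ioc_disjoint_Ioi le_rfl) measurableSet_Ioi
        (hh_cont.integrableOn_Ioc)
        ((integrableOn_congr_fun hzero measurableSet_Ioi).mpr (integrableOn_zero)),
      setIntegral_congr_fun measurableSet_Ioi hzero]
    simp [intervalIntegral.integral_of_le hε.le]
  -- Step 8: substitution y = ε s
  have hsub : (∫ y in (0:ℝ)..ε, h y) =
      ε ^ (2 * n + 2) * ∫ s in (0:ℝ)..1, s ^ (2 * m + 1) * (2 * Real.sqrt (1 - s ^ 4)) := by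
    have hcomp := intervalIntegral.integral_comp_mul_deriv (a := (0:ℝ)) (b := 1)
      (f := fun s => ε * s) (f' := fun _ => ε) (g := h)
      (fun x _ => by simpa using (hasDerivAt_id x).const_mul ε) continuousOn_const hh_cont
    norm_num [Function.comp] at hcomp
    rw [← hcomp, ← intervalIntegral.integral_mul_const, ← intervalIntegral.integral_const_mul]
    apply intervalIntegral.integral_congr
    intro s _
    simp only [hh]
    have he1 : ε ^ 4 - (ε * s) ^ 4 = ε ^ 4 * (1 - s ^ 4) := by ring
    have he2 : Real.sqrt (ε ^ 4) = ε ^ 2 := by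
      rw [show ε ^ 4 = (ε ^ 2) ^ 2 by ring, Real.sqrt_sq (sq_nonneg ε)]
    rw [he1, Real.sqrt_mul (by positivity) _, he2]
    have hexp : 2 * n - 1 = 2 * m + 1 := by omega
    rw [hexp]
    ring
  -- Step 9: put everything together
  rw [hvol1, hvol2, hvol3, ENNReal.toReal_ofReal (integral_nonneg hg_nonneg), hrad]
  simp only [smul_eq_mul, ← hh]
  rw [hsplit, hsub, scalar_identity m]
  rw [nsmul_eq_mul]
  have hm1 : ((m:ℝ) + 1) ≠ 0 := by positivity
  push_cast
  field_simp
  rw [hn']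
  push_cast
  ring_nf
end
end

section
/- For each coordinate index i, the integral over the gauge ball satisfies ∫_{B(0,ε)} (x_i² + y_i²) dx dy dt = (1/(n+1)) · (∫₀¹(1−s²)^{(n+1)/2}ds / ∫₀¹(1−s²)^{n/2}ds) · |B(0,ε)| · ε². -/
open MeasureTheory Filter Topology

noncomputable section

namespace SecondMomentAux

open Real Set intervalIntegral

noncomputable def Wl (k : ℕ) : ℝ := ∫ x in (0:ℝ)..(π/2), sin x ^ k

lemma Wl_rec (k : ℕ) : Wl (k+2) = ((k:ℝ)+1)/((k:ℝ)+2) * Wl k := by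
  unfold Wl
  rw [integral_sin_pow]
  simp

lemma Wl_pos (k : ℕ) : 0 < Wl k := by
  unfold Wl
  apply intervalIntegral.intervalIntegral_pos_of_pos_on
  · exact (Continuous.pow (continuous_sin) k).intervalIntegrable 0 (π/2)
  · intro x hx
    exact pow_pos (sin_pos_of_pos_of_lt_pi hx.1 (by linarith [hx.2, pi_pos])) k
  · positivity

lemma cos_Wl (k : ℕ) : (∫ x in (0:ℝ)..(π/2), cos x ^ k) = Wl k := by
  have := intervalIntegral.integral_comp_sub_left (fun y => sin y ^ k) (π/2) (a := 0) (b := π/2)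
  simp only [Real.sin_pi_div_two_sub, sub_self, sub_zero] at this
  rw [Wl, ← this]

lemma sin_sq_cos (m : ℕ) :
    (∫ x in (0:ℝ)..(π/2), sin x ^ m * cos x ^ 2) = Wl m / ((m:ℝ) + 2) := by
  have h1 : ∀ x : ℝ, sin x ^ m * cos x ^ 2 = sin x ^ m - sin x ^ (m + 2) := by
    intro x
    rw [cos_sq']
    ring
  simp_rw [h1]
  rw [intervalIntegral.integral_sub (f := fun x => sin x ^ m) (g := fun x => sin x ^ (m+2)) ((continuous_sin.pow m).intervalIntegrable _ _)
    ((continuous_sin.pow (m+2)).intervalIntegrable _ _)]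
  have := Wl_rec m
  unfold Wl at *
  rw [this]
  field_simp
  ring

lemma rpow_half_nat (c : ℝ) (hc : 0 ≤ c) (m : ℕ) : ((c^2 : ℝ)) ^ ((m:ℝ)/2) = c ^ m := by
  have h2 : ((2:ℕ):ℝ) * ((m:ℝ)/2) = (m:ℝ) := by push_cast; ring
  rw [← Real.rpow_natCast c 2, ← Real.rpow_mul hc, h2, Real.rpow_natCast]

lemma Jval (m : ℕ) (hm : 1 ≤ m) :
    (∫ s in (0:ℝ)..1, (1 - s^2) ^ ((m:ℝ)/2)) = Wl (m+1) := by
  have hm' : (1:ℝ) ≤ (m:ℝ) := by exact_mod_cast hm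
  have hcont : Continuous (fun u : ℝ => (1 - u^2) ^ ((m:ℝ)/2)) := by
    apply Continuous.comp (g := fun t : ℝ => t ^ ((m:ℝ)/2))
    · rw [continuous_iff_continuousAt]
      intro x
      exact Real.continuousAt_rpow_const x _ (Or.inr (by linarith))
    · fun_prop
  have hsub := intervalIntegral.integral_comp_smul_deriv
    (a := 0) (b := π/2) (f := sin) (f' := cos)
    (fun x _ => Real.hasDerivAt_sin x) continuous_cos.continuousOn hcont
  rw [Real.sin_zero, Real.sin_pi_div_two] at hsub
  simp only [Function.comp_apply] at hsub
  rw [← hsub]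
  have hcongr : ∀ x ∈ Set.uIcc (0:ℝ) (π/2),
      cos x • (1 - sin x ^ 2) ^ ((m:ℝ)/2) = cos x ^ (m+1) := by
    intro x hx
    rw [Set.uIcc_of_le (by positivity)] at hx
    have hcos : 0 ≤ cos x := Real.cos_nonneg_of_mem_Icc ⟨by linarith [hx.1, pi_pos], hx.2⟩
    rw [← Real.cos_sq' x, rpow_half_nat _ hcos, smul_eq_mul, ← pow_succ']
  rw [intervalIntegral.integral_congr hcongr, cos_Wl]

lemma Kval (m : ℕ) (ε : ℝ) (hε : 0 < ε) :
    (∫ r in (0:ℝ)..ε, r^(2*m+1) * (2 * Real.sqrt (ε^4 - r^4)))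
      = ε^(2*m+4) * (Wl m / ((m:ℝ)+2)) := by
  have hg : Continuous (fun r : ℝ => r^(2*m+1) * (2 * Real.sqrt (ε^4 - r^4))) := by fun_prop
  have hh : Continuous (fun u : ℝ => u^m * Real.sqrt (1 - u^2)) := by fun_prop
  -- step C : ∫_0^{π/2} sin^m cos^2 = ∫_0^1 u^m √(1-u²)
  have stepC : (∫ u in (0:ℝ)..1, u^m * Real.sqrt (1 - u^2)) = Wl m / ((m:ℝ)+2) := by
    have hsub := intervalIntegral.integral_comp_smul_deriv
      (a := 0) (b := π/2) (f := sin) (f' := cos)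
      (fun x _ => Real.hasDerivAt_sin x) continuous_cos.continuousOn hh
    rw [Real.sin_zero, Real.sin_pi_div_two] at hsub
    simp only [Function.comp_apply] at hsub
    rw [← hsub, ← sin_sq_cos m]
    apply intervalIntegral.integral_congr
    intro x hx
    rw [Set.uIcc_of_le (by positivity)] at hx
    have hcos : 0 ≤ cos x := Real.cos_nonneg_of_mem_Icc ⟨by linarith [hx.1, pi_pos], hx.2⟩
    simp only [smul_eq_mul]
    rw [← Real.cos_sq' x, Real.sqrt_sq hcos]
    ring
  -- step B : ∫_0^1 s^{2m+1}·2√(1-s⁴) = ∫_0^1 u^m √(1-u²)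
  have stepB : (∫ s in (0:ℝ)..1, s^(2*m+1) * (2 * Real.sqrt (1 - s^4)))
      = ∫ u in (0:ℝ)..1, u^m * Real.sqrt (1 - u^2) := by
    have hsub := intervalIntegral.integral_comp_smul_deriv
      (a := 0) (b := 1) (f := fun s : ℝ => s^2) (f' := fun s : ℝ => 2*s)
      (fun x _ => by simpa using (hasDerivAt_pow 2 x)) (by fun_prop) hh
    norm_num at hsub
    rw [← hsub]
    apply intervalIntegral.integral_congr
    intro x _
    simp only []
    rw [show ((x^2)^m : ℝ) = x^(2*m) by rw [← pow_mul],
      show (1 - (x^2)^2 : ℝ) = 1 - x^4 by ring]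
    ring
  -- step A : scaling r = ε s
  have hsq : ∀ s : ℝ, Real.sqrt (ε^4 - (ε*s)^4) = ε^2 * Real.sqrt (1 - s^4) := by
    intro s
    rw [show ε^4 - (ε*s)^4 = ε^4 * (1 - s^4) by ring, Real.sqrt_mul (by positivity),
      show (ε^4 : ℝ) = (ε^2)^2 by ring, Real.sqrt_sq (by positivity)]
  have hsub := intervalIntegral.integral_comp_smul_deriv
    (a := 0) (b := 1) (f := fun s : ℝ => ε*s) (f' := fun _ : ℝ => ε)
    (fun x _ => by simpa using (hasDerivAt_id x).const_mul ε) (by fun_prop) hg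
  norm_num [mul_zero, mul_one] at hsub
  rw [← hsub,
    show (∫ x in (0:ℝ)..1, (ε*x)^(2*m+1) * (2 * Real.sqrt (ε^4 - (ε*x)^4)))
      = ∫ x in (0:ℝ)..1, ε^(2*m+3) * (x^(2*m+1) * (2 * Real.sqrt (1 - x^4))) from
    intervalIntegral.integral_congr (fun x _ => by
      show (ε*x)^(2*m+1) * (2 * Real.sqrt (ε^4 - (ε*x)^4))
        = ε^(2*m+3) * (x^(2*m+1) * (2 * Real.sqrt (1 - x^4)))
      rw [hsq x, mul_pow]
      ring),
    intervalIntegral.integral_const_mul, stepB, stepC]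
  ring


/-! ### One-dimensional Wallis-type integrals -/


/-! ### Geometric setup -/

abbrev Esp (n : ℕ) := EuclideanSpace ℝ (Fin n ⊕ Fin n)

def Gw (ε r : ℝ) : ℝ := 2 * Real.sqrt (ε^4 - r^4)

lemma Gw_cont (ε : ℝ) : Continuous (Gw ε) := by unfold Gw; fun_prop

lemma Gw_zero (ε r : ℝ) (hε : 0 ≤ ε) (h : ε ≤ r) : Gw ε r = 0 := by
  have h4 : ε^4 ≤ r^4 := pow_le_pow_left₀ hε h 4
  unfold Gw
  rw [Real.sqrt_eq_zero'.mpr (by linarith)]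
  ring

lemma normsq_esp {n : ℕ} (z : Esp n) :
    ((∑ i, (z (Sum.inl i))^2) + ∑ i, (z (Sum.inr i))^2) = ‖z‖^2 := by
  rw [EuclideanSpace.norm_eq, Real.sq_sqrt (by positivity)]
  simp [Real.norm_eq_abs, sq_abs, Fintype.sum_sum_type]

def heisEquiv (n : ℕ) : (Esp n × ℝ) ≃ᵐ Heis n :=
  ((((MeasurableEquiv.toLp 2 ((Fin n ⊕ Fin n) → ℝ)).symm).trans
      (MeasurableEquiv.sumPiEquivProdPi (fun _ => ℝ))).prodCongr
    (MeasurableEquiv.refl ℝ)).trans MeasurableEquiv.prodAssoc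

lemma heisEquiv_apply {n : ℕ} (p : Esp n × ℝ) :
    heisEquiv n p = (fun i => p.1 (Sum.inl i), fun i => p.1 (Sum.inr i), p.2) := rfl

lemma heisEquiv_mp (n : ℕ) : MeasurePreserving (heisEquiv n) volume volume := by
  have h1 : MeasurePreserving
      ((MeasurableEquiv.sumPiEquivProdPi (fun _ : Fin n ⊕ Fin n => ℝ)) ∘
        ((MeasurableEquiv.toLp 2 ((Fin n ⊕ Fin n) → ℝ)).symm)) volume volume :=
    (volume_measurePreserving_sumPiEquivProdPi _).comp
      (EuclideanSpace.volume_preserving_symm_measurableEquiv_toLp _)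
  have h2 : MeasurePreserving
      (Prod.map ((MeasurableEquiv.sumPiEquivProdPi (fun _ : Fin n ⊕ Fin n => ℝ)) ∘
        ((MeasurableEquiv.toLp 2 ((Fin n ⊕ Fin n) → ℝ)).symm)) (id : ℝ → ℝ))
      (volume.prod volume) (volume.prod volume) := h1.prod (MeasurePreserving.id _)
  rw [← MeasureTheory.Measure.volume_eq_prod] at h2
  exact (volume_preserving_prodAssoc.comp h2 : _)

lemma hBall_eq {n : ℕ} (ε : ℝ) (hε : 0 < ε) :
    hBall (hOne : Heis n) ε
      = {Q : Heis n | ((∑ i, Q.1 i^2) + ∑ i, Q.2.1 i^2)^2 + Q.2.2^2 < ε^4} := by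
  ext Q
  have hmul : hMul (hInv hOne) Q = Q := by
    simp [hMul, hInv, hOne, Prod.ext_iff]
  simp only [hBall, hGauge, Set.mem_setOf_eq, hmul]
  set a := ((∑ i, Q.1 i^2) + ∑ i, Q.2.1 i^2)^2 + Q.2.2^2 with ha
  have ha0 : 0 ≤ a := by positivity
  have h4 : (a ^ ((1:ℝ)/4))^(4:ℕ) = a := by
    rw [← Real.rpow_natCast (a ^ ((1:ℝ)/4)) 4, ← Real.rpow_mul ha0]
    norm_num
  constructor
  · intro h
    calc a = (a ^ ((1:ℝ)/4))^(4:ℕ) := h4.symm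
    _ < ε^(4:ℕ) := by
        exact pow_lt_pow_left₀ h (Real.rpow_nonneg ha0 _) (by norm_num)
    _ = ε^4 := by norm_num
  · intro h
    have h' : (a ^ ((1:ℝ)/4))^(4:ℕ) < ε^(4:ℕ) := by rw [h4]; exact_mod_cast h
    exact lt_of_pow_lt_pow_left₀ 4 hε.le h'

lemma preimage_ball {n : ℕ} (ε : ℝ) (hε : 0 < ε) :
    (heisEquiv n) ⁻¹' (hBall (hOne : Heis n) ε)
      = {p : Esp n × ℝ | ‖p.1‖^4 + p.2^2 < ε^4} := by
  ext p
  rw [Set.mem_preimage, hBall_eq ε hε]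
  simp only [Set.mem_setOf_eq, heisEquiv_apply]
  rw [normsq_esp p.1, show (‖p.1‖^2)^2 = ‖p.1‖^4 by ring]

lemma sq_lt_set (c : ℝ) : {t : ℝ | t^2 < c} = Set.Ioo (-Real.sqrt c) (Real.sqrt c) := by
  ext t
  simp only [Set.mem_setOf_eq, Set.mem_Ioo, ← abs_lt]
  constructor
  · intro h
    exact (Real.lt_sqrt (abs_nonneg t)).mpr (by rwa [sq_abs])
  · intro h
    have h1 := (Real.lt_sqrt (abs_nonneg t)).mp h
    rwa [sq_abs] at h1

lemma fubini_slice {n : ℕ} (ε : ℝ) (hε : 0 < ε) (F : Esp n → ℝ) (hF : Continuous F) :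
    ∫ p in {p : Esp n × ℝ | ‖p.1‖^4 + p.2^2 < ε^4}, F p.1
      = ∫ z : Esp n, F z * Gw ε ‖z‖ := by
  set S := {p : Esp n × ℝ | ‖p.1‖^4 + p.2^2 < ε^4} with hSdef
  have hopen : IsOpen S := by
    have hc : Continuous fun p : Esp n × ℝ => ‖p.1‖^4 + p.2^2 := by fun_prop
    exact isOpen_lt hc continuous_const
  have hmeas : MeasurableSet S := hopen.measurableSet
  have hsub : S ⊆ (Metric.closedBall (0 : Esp n) ε) ×ˢ (Metric.closedBall (0:ℝ) (ε^2)) := by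
    rintro ⟨z, t⟩ h
    simp only [hSdef, Set.mem_setOf_eq] at h
    have h1 : ‖z‖^4 < ε^4 := by nlinarith [sq_nonneg t]
    have h2 : t^2 < ε^4 := by nlinarith [pow_nonneg (norm_nonneg z) 4]
    constructor
    · simp only [Metric.mem_closedBall, dist_zero_right]
      exact le_of_pow_le_pow_left₀ (by norm_num) hε.le h1.le
    · simp only [Metric.mem_closedBall, Real.dist_eq, sub_zero]
      have : |t|^2 ≤ (ε^2)^2 := by rw [sq_abs]; nlinarith
      exact le_of_pow_le_pow_left₀ (by norm_num) (by positivity) this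
  have hcpt : IsCompact ((Metric.closedBall (0 : Esp n) ε) ×ˢ (Metric.closedBall (0:ℝ) (ε^2))) :=
    (isCompact_closedBall _ _).prod (isCompact_closedBall _ _)
  have hint : IntegrableOn (fun p : Esp n × ℝ => F p.1) S volume :=
    IntegrableOn.mono_set
      (((hF.comp continuous_fst).continuousOn).integrableOn_compact hcpt) hsub
  rw [← MeasureTheory.integral_indicator hmeas]
  have hint2 : Integrable (S.indicator fun p : Esp n × ℝ => F p.1) volume :=
    (integrable_indicator_iff hmeas).mpr hint
  rw [MeasureTheory.Measure.volume_eq_prod] at hint2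
  rw [MeasureTheory.Measure.volume_eq_prod (α := Esp n) (β := ℝ),
    MeasureTheory.integral_prod _ hint2]
  refine integral_congr_ae (Filter.Eventually.of_forall fun z => ?_)
  show (∫ y : ℝ, S.indicator (fun p : Esp n × ℝ => F p.1) (z, y)) = F z * Gw ε ‖z‖
  have hpt : ∀ t : ℝ, S.indicator (fun p : Esp n × ℝ => F p.1) (z, t)
      = Set.indicator {t : ℝ | t^2 < ε^4 - ‖z‖^4} (fun _ => F z) t := by
    intro t
    by_cases h : ‖z‖^4 + t^2 < ε^4
    · rw [Set.indicator_of_mem (show (z,t) ∈ S from h),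
        Set.indicator_of_mem (show t ∈ {t : ℝ | t^2 < ε^4 - ‖z‖^4} by
          simp only [Set.mem_setOf_eq]; linarith)]
    · rw [Set.indicator_of_notMem (show (z,t) ∉ S from h),
        Set.indicator_of_notMem (show t ∉ {t : ℝ | t^2 < ε^4 - ‖z‖^4} by
          simp only [Set.mem_setOf_eq]; intro hc; exact h (by linarith))]
  rw [integral_congr_ae (Filter.Eventually.of_forall hpt), sq_lt_set,
    integral_indicator_const _ measurableSet_Ioo, measureReal_def, Real.volume_Ioo,
    show (Real.sqrt (ε^4 - ‖z‖^4) - -Real.sqrt (ε^4 - ‖z‖^4))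
      = 2*Real.sqrt (ε^4-‖z‖^4) by ring,
    ENNReal.toReal_ofReal (by positivity), smul_eq_mul]
  unfold Gw
  ring

lemma integrable_radial {n : ℕ} (ε : ℝ) (hε : 0 < ε) (F : Esp n → ℝ) (hF : Continuous F) :
    Integrable (fun z : Esp n => F z * Gw ε ‖z‖) := by
  apply Continuous.integrable_of_hasCompactSupport
  · exact hF.mul ((Gw_cont ε).comp continuous_norm)
  · apply HasCompactSupport.intro (isCompact_closedBall (0 : Esp n) ε)
    intro z hz
    simp only [Metric.mem_closedBall, dist_zero_right, not_le] at hz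
    rw [Gw_zero ε ‖z‖ hε.le hz.le, mul_zero]

lemma coord_cont {n : ℕ} (j : Fin n ⊕ Fin n) : Continuous fun z : Esp n => z j :=
  (EuclideanSpace.proj (𝕜 := ℝ) j).continuous

lemma coord_integral_eq {n : ℕ} (ε : ℝ) (j j' : Fin n ⊕ Fin n) :
    ∫ z : Esp n, (z j)^2 * Gw ε ‖z‖ = ∫ z : Esp n, (z j')^2 * Gw ε ‖z‖ := by
  calc ∫ z : Esp n, (z j)^2 * Gw ε ‖z‖
      = ∫ x : Esp n, (fun z : Esp n => (z j')^2 * Gw ε ‖z‖)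
          ((LinearIsometryEquiv.piLpCongrLeft 2 ℝ ℝ (Equiv.swap j j')) x) := by
        refine integral_congr_ae (Filter.Eventually.of_forall fun x => ?_)
        show (x j)^2 * Gw ε ‖x‖
          = (((LinearIsometryEquiv.piLpCongrLeft 2 ℝ ℝ (Equiv.swap j j')) x) j')^2
            * Gw ε ‖(LinearIsometryEquiv.piLpCongrLeft 2 ℝ ℝ (Equiv.swap j j')) x‖
        rw [LinearIsometryEquiv.norm_map, LinearIsometryEquiv.piLpCongrLeft_apply]
        show (x j)^2 * Gw ε ‖x‖ = (x ((Equiv.swap j j').symm j'))^2 * Gw ε ‖x‖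
        rw [Equiv.symm_swap, Equiv.swap_apply_right]
    _ = ∫ z : Esp n, (z j')^2 * Gw ε ‖z‖ :=
        MeasureTheory.integral_comp
          (LinearIsometryEquiv.piLpCongrLeft 2 ℝ ℝ (Equiv.swap j j'))
          (fun z : Esp n => (z j')^2 * Gw ε ‖z‖)

lemma sum_coord_integral {n : ℕ} (ε : ℝ) (hε : 0 < ε) (j : Fin n ⊕ Fin n) :
    (2*(n:ℝ)) * ∫ z : Esp n, (z j)^2 * Gw ε ‖z‖ = ∫ z : Esp n, ‖z‖^2 * Gw ε ‖z‖ := by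
  have h1 : ∫ z : Esp n, ‖z‖^2 * Gw ε ‖z‖
      = ∑ j' : Fin n ⊕ Fin n, ∫ z : Esp n, (z j')^2 * Gw ε ‖z‖ := by
    rw [← MeasureTheory.integral_finset_sum]
    · refine integral_congr_ae (Filter.Eventually.of_forall fun z => ?_)
      show ‖z‖^2 * Gw ε ‖z‖ = ∑ j' : Fin n ⊕ Fin n, (z j')^2 * Gw ε ‖z‖
      rw [← Finset.sum_mul]
      congr 1
      rw [Fintype.sum_sum_type]
      exact (normsq_esp z).symm
    · intro j' _
      exact integrable_radial ε hε _ ((coord_cont j').pow 2)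
  rw [h1, Finset.sum_congr rfl (fun j' _ => coord_integral_eq ε j' j), Finset.sum_const]
  simp only [Finset.card_univ, Fintype.card_sum, Fintype.card_fin, nsmul_eq_mul]
  push_cast
  ring

lemma radial_integral {n : ℕ} (hn : 1 ≤ n) (f : ℝ → ℝ) :
    ∫ z : Esp n, f ‖z‖
      = (2*(n:ℝ)) * (volume (Metric.ball (0 : Esp n) 1)).toReal
          * ∫ y in Set.Ioi (0:ℝ), y ^ (2*n - 1) * f y := by
  haveI : Nonempty (Fin n ⊕ Fin n) := ⟨Sum.inl ⟨0, hn⟩⟩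
  haveI : Nontrivial (Esp n) := by
    refine nontrivial_of_ne (EuclideanSpace.single (Sum.inl ⟨0, hn⟩) (1:ℝ)) 0 (fun h => ?_)
    have h1 := congrArg (fun v : Esp n => v (Sum.inl ⟨0, hn⟩)) h
    simp [EuclideanSpace.single_apply] at h1
  have hdim : Module.finrank ℝ (Esp n) = 2*n := by
    simp [finrank_euclideanSpace, Fintype.card_sum, Fintype.card_fin]
    ring
  have h := MeasureTheory.integral_fun_norm_addHaar (volume : Measure (Esp n)) f
  rw [hdim] at h
  have h2 : (∫ y in Set.Ioi (0:ℝ), y ^ (2*n-1) • f y)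
      = ∫ y in Set.Ioi (0:ℝ), y ^ (2*n-1) * f y := by
    simp_rw [smul_eq_mul]
  rw [h, h2, nsmul_eq_mul, smul_eq_mul, measureReal_def]
  push_cast
  ring

lemma ioi_Gw (ε : ℝ) (hε : 0 < ε) (k : ℕ) :
    (∫ y in Set.Ioi (0:ℝ), y ^ k * Gw ε y) = ∫ y in (0:ℝ)..ε, y ^ k * Gw ε y := by
  rw [intervalIntegral.integral_of_le hε.le]
  refine MeasureTheory.setIntegral_eq_of_subset_of_forall_diff_eq_zero
    measurableSet_Ioi Set.Ioc_subset_Ioi_self (fun y hy => ?_)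
  obtain ⟨hy1, hy2⟩ := hy
  have : ε < y := by
    by_contra hc
    exact hy2 ⟨hy1, le_of_not_gt hc⟩
  rw [Gw_zero ε y hε.le this.le, mul_zero]

end SecondMomentAux

open SecondMomentAux in
/-- Second moments of the gauge ball: for each coordinate index `i`,
`∫_{B(0,ε)} (x_i² + y_i²) = (1/(n+1)) · (∫₀¹(1−s²)^{(n+1)/2}/∫₀¹(1−s²)^{n/2}) · |B(0,ε)| · ε²`. -/
theorem second_moment_gauge_ball (n : ℕ) (hn : 1 ≤ n) (ε : ℝ) (hε : 0 < ε) (i : Fin n) :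
    ∫ P in hBall (hOne : Heis n) ε, ((P.1 i) ^ 2 + (P.2.1 i) ^ 2) =
      (1 / ((n : ℝ) + 1)) *
        ((∫ s in (0:ℝ)..1, (1 - s ^ 2) ^ (((n : ℝ) + 1) / 2)) /
          ∫ s in (0:ℝ)..1, (1 - s ^ 2) ^ ((n : ℝ) / 2)) *
        (volume (hBall (hOne : Heis n) ε)).toReal * ε ^ 2 := by
  obtain ⟨k, rfl⟩ : ∃ k, n = k + 1 := ⟨n - 1, (Nat.succ_pred_eq_of_pos hn).symm⟩
  clear hn
  have hmp := heisEquiv_mp (k+1)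
  have hemb := (heisEquiv (k+1)).measurableEmbedding
  have hF1 : Continuous (fun z : Esp (k+1) => (z (Sum.inl i))^2 + (z (Sum.inr i))^2) :=
    ((coord_cont _).pow 2).add ((coord_cont _).pow 2)
  have hA : (∫ P in hBall (hOne : Heis (k+1)) ε, ((P.1 i)^2 + (P.2.1 i)^2))
      = ∫ z : Esp (k+1), ((z (Sum.inl i))^2 + (z (Sum.inr i))^2) * Gw ε ‖z‖ := by
    rw [← hmp.setIntegral_preimage_emb hemb
        (fun P : Heis (k+1) => (P.1 i)^2 + (P.2.1 i)^2) _,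
      preimage_ball ε hε]
    exact fubini_slice ε hε _ hF1
  have hsplit : ∫ z : Esp (k+1), ((z (Sum.inl i))^2 + (z (Sum.inr i))^2) * Gw ε ‖z‖
      = (∫ z : Esp (k+1), (z (Sum.inl i))^2 * Gw ε ‖z‖)
        + ∫ z : Esp (k+1), (z (Sum.inr i))^2 * Gw ε ‖z‖ := by
    rw [← MeasureTheory.integral_add (integrable_radial ε hε (fun z => (z (Sum.inl i))^2) ((coord_cont _).pow 2))
          (integrable_radial ε hε (fun z => (z (Sum.inr i))^2) ((coord_cont _).pow 2))]
    refine MeasureTheory.integral_congr_ae (Filter.Eventually.of_forall fun z => ?_)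
    show ((z (Sum.inl i))^2 + (z (Sum.inr i))^2) * Gw ε ‖z‖
      = (z (Sum.inl i))^2 * Gw ε ‖z‖ + (z (Sum.inr i))^2 * Gw ε ‖z‖
    ring
  have hswap := coord_integral_eq (n := k+1) ε (Sum.inr i) (Sum.inl i)
  -- value of the ∫ ‖z‖² Gw integral
  have hIoi2 : (∫ y in Set.Ioi (0:ℝ), y ^ (2*(k+1) - 1) * (y^2 * Gw ε y))
      = ε^(2*(k+1)+4) * (Wl (k+1) / (((k+1:ℕ):ℝ)+2)) := by
    calc (∫ y in Set.Ioi (0:ℝ), y ^ (2*(k+1) - 1) * (y^2 * Gw ε y))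
        = ∫ y in Set.Ioi (0:ℝ), y ^ (2*(k+1)+1) * Gw ε y := by
          refine MeasureTheory.integral_congr_ae (Filter.Eventually.of_forall fun y => ?_)
          show y ^ (2*(k+1) - 1) * (y^2 * Gw ε y) = y ^ (2*(k+1)+1) * Gw ε y
          rw [show 2*(k+1) - 1 = 2*k+1 from by omega, show 2*(k+1)+1 = 2*k+3 from by omega]
          ring
      _ = ∫ y in (0:ℝ)..ε, y ^ (2*(k+1)+1) * Gw ε y := ioi_Gw ε hε _
      _ = ε^(2*(k+1)+4) * (Wl (k+1) / (((k+1:ℕ):ℝ)+2)) := Kval (k+1) ε hε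
  have hR2 : ∫ z : Esp (k+1), ‖z‖^2 * Gw ε ‖z‖
      = 2*((k+1:ℕ):ℝ) * (volume (Metric.ball (0 : Esp (k+1)) 1)).toReal
          * (ε^(2*(k+1)+4) * (Wl (k+1) / (((k+1:ℕ):ℝ)+2))) := by
    have hr := radial_integral (n := k+1) (by omega) (fun r => r^2 * Gw ε r)
    rw [hr, hIoi2]
  have hsum := sum_coord_integral ε hε (Sum.inl i)
  have hTval : (∫ z : Esp (k+1), (z (Sum.inl i))^2 * Gw ε ‖z‖)
      = (volume (Metric.ball (0 : Esp (k+1)) 1)).toReal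
          * (ε^(2*(k+1)+4) * (Wl (k+1) / (((k+1:ℕ):ℝ)+2))) := by
    have h2 : (2*((k+1:ℕ):ℝ)) ≠ 0 := by positivity
    apply mul_left_cancel₀ h2
    rw [hsum, hR2]
    ring
  -- volume of the ball
  have hVtoReal : (volume (hBall (hOne : Heis (k+1)) ε)).toReal
      = ∫ z : Esp (k+1), Gw ε ‖z‖ := by
    have hVS : volume (hBall (hOne : Heis (k+1)) ε)
        = volume {p : Esp (k+1) × ℝ | ‖p.1‖^4 + p.2^2 < ε^4} := by
      rw [← preimage_ball (n := k+1) ε hε]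
      exact (hmp.measure_preimage_emb hemb _).symm
    rw [hVS]
    have h1 : (volume {p : Esp (k+1) × ℝ | ‖p.1‖^4 + p.2^2 < ε^4}).toReal
        = ∫ p in {p : Esp (k+1) × ℝ | ‖p.1‖^4 + p.2^2 < ε^4}, (1:ℝ) := by
      rw [MeasureTheory.setIntegral_const, smul_eq_mul, mul_one, measureReal_def]
    rw [h1, fubini_slice ε hε (fun _ => 1) continuous_const]
    refine MeasureTheory.integral_congr_ae (Filter.Eventually.of_forall fun z => ?_)
    show (1:ℝ) * Gw ε ‖z‖ = Gw ε ‖z‖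
    ring
  have hIoi0 : (∫ y in Set.Ioi (0:ℝ), y ^ (2*(k+1) - 1) * Gw ε y)
      = ε^(2*k+4) * (Wl k / ((k:ℝ)+2)) := by
    rw [show 2*(k+1) - 1 = 2*k+1 from by omega, ioi_Gw ε hε _]
    exact Kval k ε hε
  have hR0 : (∫ z : Esp (k+1), Gw ε ‖z‖)
      = 2*((k+1:ℕ):ℝ) * (volume (Metric.ball (0 : Esp (k+1)) 1)).toReal
          * (ε^(2*k+4) * (Wl k / ((k:ℝ)+2))) := by
    have hr := radial_integral (n := k+1) (by omega) (Gw ε)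
    rw [hr, hIoi0]
  -- J integrals
  rw [hA, hsplit, hswap, hTval, hVtoReal, hR0,
    show ((((k+1:ℕ)):ℝ)+1)/2 = (((k+2:ℕ)):ℝ)/2 from by push_cast; ring,
    Jval (k+2) (by omega), Jval (k+1) (by omega)]
  have hW3 : Wl (k+3) = (((k+1:ℕ):ℝ)+1)/(((k+1:ℕ):ℝ)+2) * Wl (k+1) := Wl_rec (k+1)
  have hW2 : Wl (k+2) = ((k:ℝ)+1)/((k:ℝ)+2) * Wl k := Wl_rec k
  rw [hW3, hW2]
  have hWk := Wl_pos k
  have hWk1 := Wl_pos (k+1)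
  have h1 : Wl k ≠ 0 := ne_of_gt hWk
  have h2 : Wl (k+1) ≠ 0 := ne_of_gt hWk1
  push_cast
  field_simp
  ring
end
end

section
/- Let u be C¹ near 0 with ∇_ℍ u(0) ≠ 0, and for small ε>0 let P_ε=(x_ε,y_ε,t_ε) be a point of maximum of u on the closed gauge ball B̄(0,ε). Then (x_ε,y_ε)/ε → ∇_ℍ u(0)/|∇_ℍ u(0)| as ε→0. -/
open MeasureTheory Filter Topology

set_option maxHeartbeats 1000000

noncomputable section

private lemma heis_cs2 {n : ℕ} (a b x y : Fin n → ℝ) :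
    ((∑ i, a i * x i) + ∑ i, b i * y i) ^ 2 ≤
      ((∑ i, (a i) ^ 2) + ∑ i, (b i) ^ 2) * ((∑ i, (x i) ^ 2) + ∑ i, (y i) ^ 2) := by
  have h := Finset.sum_mul_sq_le_sq_mul_sq Finset.univ (Sum.elim a b) (Sum.elim x y)
  simpa [Fintype.sum_sum_type] using h

private lemma heis_clm_decomp {n : ℕ} (f : Heis n →L[ℝ] ℝ) (P : Heis n) :
    f P = (∑ i, P.1 i * f ((Pi.single i 1 : Fin n → ℝ), 0, 0)) +
          (∑ i, P.2.1 i * f (0, (Pi.single i 1 : Fin n → ℝ), 0)) + P.2.2 * f (0, 0, 1) := by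
  have hP : P = (∑ i, P.1 i • ((Pi.single i 1 : Fin n → ℝ), (0:Fin n → ℝ), (0:ℝ)))
       + (∑ i, P.2.1 i • ((0:Fin n → ℝ), (Pi.single i 1 : Fin n → ℝ), (0:ℝ)))
       + P.2.2 • ((0:Fin n → ℝ), (0:Fin n → ℝ), (1:ℝ)) := by
    ext j
    · simp [Prod.fst_sum, Finset.sum_apply, Pi.single_apply, mul_ite]
    · simp [Prod.snd_sum, Prod.fst_sum, Finset.sum_apply, Pi.single_apply, mul_ite]
    · simp [Prod.snd_sum, Finset.sum_apply]
  conv_lhs => rw [hP]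
  simp only [map_add, map_sum, _root_.map_smul, smul_eq_mul]

private lemma heis_mem_iff {n : ℕ} (Q : Heis n) (ε : ℝ) :
    Q ∈ hClosedBall (hOne : Heis n) ε ↔
      (((∑ i, Q.1 i ^ 2) + ∑ i, Q.2.1 i ^ 2) ^ 2 + Q.2.2 ^ 2) ^ ((1:ℝ)/4) ≤ ε := by
  simp [hClosedBall, hGauge, hMul, hInv, hOne, Set.mem_setOf_eq]

private lemma heis_bounds_of_mem {n : ℕ} (Q : Heis n) (ε : ℝ)
    (h : Q ∈ hClosedBall (hOne : Heis n) ε) :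
    ((∑ i, Q.1 i ^ 2) + ∑ i, Q.2.1 i ^ 2 ≤ ε ^ 2) ∧ |Q.2.2| ≤ ε ^ 2 := by
  rw [heis_mem_iff] at h
  set S := (∑ i, Q.1 i ^ 2) + ∑ i, Q.2.1 i ^ 2 with hS
  have hS0 : 0 ≤ S := by positivity
  have hA0 : 0 ≤ S ^ 2 + Q.2.2 ^ 2 := by positivity
  have h4 : S ^ 2 + Q.2.2 ^ 2 ≤ ε ^ 4 := by
    have h2 := pow_le_pow_left₀ (Real.rpow_nonneg hA0 _) h 4
    rwa [← Real.rpow_natCast ((S ^ 2 + Q.2.2 ^ 2) ^ ((1:ℝ)/4)) 4,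
      ← Real.rpow_mul hA0, show ((1:ℝ)/4) * (4:ℕ) = 1 by norm_num, Real.rpow_one] at h2
  constructor
  · have h5 : S ^ 2 ≤ (ε ^ 2) ^ 2 := by nlinarith [sq_nonneg Q.2.2]
    exact (pow_le_pow_iff_left₀ hS0 (by positivity) (by norm_num)).mp h5
  · have h5 : |Q.2.2| ^ 2 ≤ (ε ^ 2) ^ 2 := by rw [sq_abs]; nlinarith [sq_nonneg S]
    exact (pow_le_pow_iff_left₀ (abs_nonneg _) (by positivity) (by norm_num)).mp h5

private lemma heis_mem_of_eq {n : ℕ} (Q : Heis n) (ε : ℝ) (hε : 0 ≤ ε)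
    (hS : (∑ i, Q.1 i ^ 2) + ∑ i, Q.2.1 i ^ 2 = ε ^ 2) (ht : Q.2.2 = 0) :
    Q ∈ hClosedBall (hOne : Heis n) ε := by
  rw [heis_mem_iff, hS, ht]
  rw [show ((ε^2)^2 + (0:ℝ)^2) = ε ^ (4:ℕ) by ring, ← Real.rpow_natCast ε 4,
    ← Real.rpow_mul hε, show (4:ℕ) * ((1:ℝ)/4) = 1 by norm_num, Real.rpow_one]

private lemma heis_dir_bound {n : ℕ} (a b z w : Fin n → ℝ) (G : ℝ) (hG : 0 < G)
    (hab : (∑ i, a i ^ 2) + ∑ i, b i ^ 2 = G ^ 2)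
    (hzw : (∑ i, z i ^ 2) + ∑ i, w i ^ 2 ≤ 1) (i : Fin n) :
    (z i - a i / G) ^ 2 + (w i - b i / G) ^ 2 ≤
      2 - (2 / G) * ((∑ j, a j * z j) + ∑ j, b j * w j) := by
  have hGne : G ≠ 0 := ne_of_gt hG
  have expand : ∀ p q : Fin n → ℝ,
      ∑ j, (p j - q j / G) ^ 2
        = (∑ j, p j ^ 2) - (2 / G) * (∑ j, q j * p j) + (1 / G ^ 2) * ∑ j, q j ^ 2 := by
    intro p q
    rw [Finset.mul_sum, Finset.mul_sum, ← Finset.sum_sub_distrib, ← Finset.sum_add_distrib]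
    refine Finset.sum_congr rfl fun j _ => by field_simp; ring
  have h1 : (z i - a i / G) ^ 2 ≤ ∑ j, (z j - a j / G) ^ 2 :=
    Finset.single_le_sum (f := fun j => (z j - a j / G) ^ 2)
      (fun j _ => sq_nonneg _) (Finset.mem_univ i)
  have h2 : (w i - b i / G) ^ 2 ≤ ∑ j, (w j - b j / G) ^ 2 :=
    Finset.single_le_sum (f := fun j => (w j - b j / G) ^ 2)
      (fun j _ => sq_nonneg _) (Finset.mem_univ i)
  have e1 := expand z a
  have e2 := expand w b
  have hG2 : (1 / G ^ 2) * ((∑ j, a j ^ 2) + ∑ j, b j ^ 2) = 1 := by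
    rw [hab]; field_simp
  nlinarith [h1, h2, e1, e2]

private lemma heis_abs_lt {v δ : ℝ} (hδ : 0 < δ) (h : v ^ 2 < δ ^ 2) : |v| < δ := by
  rcases abs_cases v with ⟨h1, h2⟩ | ⟨h1, h2⟩ <;> nlinarith

private lemma heis_norm_le {n : ℕ} (P : Heis n) (r : ℝ) (hr : 0 ≤ r)
    (h1 : ∀ i, |P.1 i| ≤ r) (h2 : ∀ i, |P.2.1 i| ≤ r) (h3 : |P.2.2| ≤ r) : ‖P‖ ≤ r := by
  rw [Prod.norm_def]
  refine max_le ?_ ?_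
  · exact (pi_norm_le_iff_of_nonneg hr).mpr (fun i => by simpa [Real.norm_eq_abs] using h1 i)
  · rw [Prod.norm_def]
    refine max_le ?_ (by simpa [Real.norm_eq_abs] using h3)
    exact (pi_norm_le_iff_of_nonneg hr).mpr (fun i => by simpa [Real.norm_eq_abs] using h2 i)

private lemma heis_littleO {n : ℕ} (u : Heis n → ℝ) (h : DifferentiableAt ℝ u 0)
    (δ : ℝ) (hδ : 0 < δ) :
    ∃ r > 0, ∀ P : Heis n, ‖P‖ < r → |u P - u 0 - fderiv ℝ u 0 P| ≤ δ * ‖P‖ := by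
  have hO := hasFDerivAt_iff_isLittleO_nhds_zero.mp h.hasFDerivAt
  have h2 := hO.def hδ
  rw [Metric.eventually_nhds_iff] at h2
  obtain ⟨r, hr, hball⟩ := h2
  refine ⟨r, hr, fun P hP => ?_⟩
  have := hball (by simpa [dist_zero_right] using hP)
  simpa [zero_add, Real.norm_eq_abs] using this

/-- Direction of maximizers: if `∇_ℍ u(0) ≠ 0` and `P_ε = (x_ε, y_ε, t_ε)` maximizes `u`
over the closed gauge ball `B̄(0,ε)`, then `(x_ε, y_ε)/ε → ∇_ℍ u(0)/|∇_ℍ u(0)|` as `ε → 0⁺`. -/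
theorem maximizer_direction (n : ℕ) (u : Heis n → ℝ) (hu : ContDiffAt ℝ 1 u 0)
    (hgrad : ((fun i => Xd i u 0, fun i => Yd i u 0) : (Fin n → ℝ) × (Fin n → ℝ)) ≠ 0)
    (ε₀ : ℝ) (hε₀ : 0 < ε₀) (Pmax : ℝ → Heis n)
    (hmem : ∀ ε ∈ Set.Ioo (0:ℝ) ε₀, Pmax ε ∈ hClosedBall (hOne : Heis n) ε)
    (hmax : ∀ ε ∈ Set.Ioo (0:ℝ) ε₀, IsMaxOn u (hClosedBall (hOne : Heis n) ε) (Pmax ε)) :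
    ∀ i : Fin n,
      Tendsto (fun ε => (Pmax ε).1 i / ε) (𝓝[>] (0:ℝ)) (𝓝 (Xd i u 0 / hGradNorm u 0)) ∧
      Tendsto (fun ε => (Pmax ε).2.1 i / ε) (𝓝[>] (0:ℝ)) (𝓝 (Yd i u 0 / hGradNorm u 0)) := by
  classical
  have hdiff : DifferentiableAt ℝ u 0 := hu.differentiableAt one_ne_zero
  set f := fderiv ℝ u 0 with hf
  set G : ℝ := hGradNorm u 0 with hGdef
  have hXd : ∀ i, Xd i u 0 = f ((Pi.single i 1 : Fin n → ℝ), 0, 0) := by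
    intro i; simp [Xd, ← hf]
  have hYd : ∀ i, Yd i u 0 = f (0, (Pi.single i 1 : Fin n → ℝ), 0) := by
    intro i; simp [Yd, ← hf]
  have hApos : 0 < (∑ i, Xd i u 0 ^ 2) + ∑ i, Yd i u 0 ^ 2 := by
    by_contra hcon
    push_neg at hcon
    have s1 : (0:ℝ) ≤ ∑ i, Xd i u 0 ^ 2 := by positivity
    have s2 : (0:ℝ) ≤ ∑ i, Yd i u 0 ^ 2 := by positivity
    have e1 : ∑ i, Xd i u 0 ^ 2 = 0 := le_antisymm (by linarith) s1
    have e2 : ∑ i, Yd i u 0 ^ 2 = 0 := le_antisymm (by linarith) s2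
    have hX : ∀ i, Xd i u 0 = 0 := fun i =>
      (pow_eq_zero_iff two_ne_zero).mp
        ((Finset.sum_eq_zero_iff_of_nonneg (fun j _ => sq_nonneg _)).mp e1 i (Finset.mem_univ i))
    have hY : ∀ i, Yd i u 0 = 0 := fun i =>
      (pow_eq_zero_iff two_ne_zero).mp
        ((Finset.sum_eq_zero_iff_of_nonneg (fun j _ => sq_nonneg _)).mp e2 i (Finset.mem_univ i))
    exact hgrad (Prod.ext (funext hX) (funext hY))
  have hG : 0 < G := by
    rw [hGdef]; unfold hGradNorm; exact Real.sqrt_pos.mpr hApos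
  have hGne : G ≠ 0 := ne_of_gt hG
  have hA : (∑ i, Xd i u 0 ^ 2) + ∑ i, Yd i u 0 ^ 2 = G ^ 2 := by
    rw [hGdef]; unfold hGradNorm; rw [Real.sq_sqrt hApos.le]
  set c : ℝ := Td u 0 with hc
  have hcf : c = f (0, 0, 1) := rfl
  -- the linear approximation of u along points of the ball
  have hfP : ∀ P : Heis n, f P =
      ((∑ i, Xd i u 0 * P.1 i) + ∑ i, Yd i u 0 * P.2.1 i) + P.2.2 * c := by
    intro P
    rw [heis_clm_decomp f P, hcf]
    congr 1
    congr 1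
    · exact Finset.sum_congr rfl fun i _ => by rw [hXd i, mul_comm]
    · exact Finset.sum_congr rfl fun i _ => by rw [hYd i, mul_comm]
  -- the numerator function
  set num : ℝ → ℝ := fun ε =>
    (∑ i, Xd i u 0 * (Pmax ε).1 i) + ∑ i, Yd i u 0 * (Pmax ε).2.1 i with hnum
  -- upper bound : num ε ≤ G * ε on Ioo 0 ε₀
  have hupper : ∀ ε ∈ Set.Ioo (0:ℝ) ε₀, num ε ≤ G * ε := by
    intro ε hε
    obtain ⟨hSP, _⟩ := heis_bounds_of_mem (Pmax ε) ε (hmem ε hε)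
    have hcs := heis_cs2 (fun i => Xd i u 0) (fun i => Yd i u 0)
      (fun i => (Pmax ε).1 i) (fun i => (Pmax ε).2.1 i)
    have hsq : num ε ^ 2 ≤ (G * ε) ^ 2 := by
      calc num ε ^ 2 ≤ ((∑ i, Xd i u 0 ^ 2) + ∑ i, Yd i u 0 ^ 2) *
            ((∑ i, (Pmax ε).1 i ^ 2) + ∑ i, (Pmax ε).2.1 i ^ 2) := hcs
        _ ≤ G ^ 2 * ε ^ 2 := by
            rw [hA]; exact mul_le_mul_of_nonneg_left hSP (by positivity)
        _ = (G * ε) ^ 2 := by ring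
    have h1 : |num ε| ≤ G * ε := by
      exact (pow_le_pow_iff_left₀ (abs_nonneg (num ε))
        (mul_nonneg hG.le hε.1.le) (by norm_num : 2 ≠ 0)).mp (by rwa [sq_abs])
    exact le_trans (le_abs_self _) h1
  -- norm bound for Pmax
  have hnormP : ∀ ε ∈ Set.Ioo (0:ℝ) ε₀, ε ≤ 1 → ‖Pmax ε‖ ≤ ε := by
    intro ε hε hε1
    obtain ⟨hSP, htP⟩ := heis_bounds_of_mem (Pmax ε) ε (hmem ε hε)
    have hε' : (0:ℝ) ≤ ε := hε.1.le
    refine heis_norm_le _ ε hε' (fun i => ?_) (fun i => ?_) ?_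
    · have h1 : (Pmax ε).1 i ^ 2 ≤ ε ^ 2 := by
        have h0 : (Pmax ε).1 i ^ 2 ≤ ∑ j, (Pmax ε).1 j ^ 2 :=
          Finset.single_le_sum (f := fun j => (Pmax ε).1 j ^ 2)
            (fun j _ => sq_nonneg _) (Finset.mem_univ i)
        have h2 : (0:ℝ) ≤ ∑ j, (Pmax ε).2.1 j ^ 2 := by positivity
        linarith
      exact (pow_le_pow_iff_left₀ (abs_nonneg _) hε' (by norm_num : 2 ≠ 0)).mp
        (by rwa [sq_abs])
    · have h1 : (Pmax ε).2.1 i ^ 2 ≤ ε ^ 2 := by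
        have h0 : (Pmax ε).2.1 i ^ 2 ≤ ∑ j, (Pmax ε).2.1 j ^ 2 :=
          Finset.single_le_sum (f := fun j => (Pmax ε).2.1 j ^ 2)
            (fun j _ => sq_nonneg _) (Finset.mem_univ i)
        have h2 : (0:ℝ) ≤ ∑ j, (Pmax ε).1 j ^ 2 := by positivity
        linarith
      exact (pow_le_pow_iff_left₀ (abs_nonneg _) hε' (by norm_num : 2 ≠ 0)).mp
        (by rwa [sq_abs])
    · calc |(Pmax ε).2.2| ≤ ε ^ 2 := htP
        _ ≤ ε := by nlinarith
  -- the comparison point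
  set Q : ℝ → Heis n := fun ε =>
    ((ε / G) • fun i => Xd i u 0, (ε / G) • fun i => Yd i u 0, (0:ℝ)) with hQ
  have hQ1 : ∀ ε i, (Q ε).1 i = (ε / G) * Xd i u 0 := fun ε i => rfl
  have hQ21 : ∀ ε i, (Q ε).2.1 i = (ε / G) * Yd i u 0 := fun ε i => rfl
  have hQ22 : ∀ ε, (Q ε).2.2 = 0 := fun ε => rfl
  have hQS : ∀ ε, (∑ i, (Q ε).1 i ^ 2) + ∑ i, (Q ε).2.1 i ^ 2 = ε ^ 2 := by
    intro ε
    simp only [hQ1, hQ21, Pi.smul_apply, smul_eq_mul, mul_pow]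
    rw [← Finset.mul_sum, ← Finset.mul_sum, ← mul_add, hA]
    field_simp
  have hQmem : ∀ ε : ℝ, 0 ≤ ε → Q ε ∈ hClosedBall (hOne : Heis n) ε := fun ε hε =>
    heis_mem_of_eq (Q ε) ε hε (hQS ε) (hQ22 ε)
  have hfQ : ∀ ε, f (Q ε) = ε * G := by
    intro ε
    rw [hfP (Q ε), hQ22]
    simp only [hQ1, hQ21, Pi.smul_apply, smul_eq_mul]
    have e1 : ∑ i, Xd i u 0 * ((ε / G) * Xd i u 0) = (ε / G) * ∑ i, Xd i u 0 ^ 2 := by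
      rw [Finset.mul_sum]; exact Finset.sum_congr rfl fun i _ => by ring
    have e2 : ∑ i, Yd i u 0 * ((ε / G) * Yd i u 0) = (ε / G) * ∑ i, Yd i u 0 ^ 2 := by
      rw [Finset.mul_sum]; exact Finset.sum_congr rfl fun i _ => by ring
    rw [e1, e2, ← mul_add, hA]
    field_simp
    ring
  have hnormQ : ∀ ε : ℝ, 0 ≤ ε → ‖Q ε‖ ≤ ε := by
    intro ε hε
    refine heis_norm_le _ ε hε (fun i => ?_) (fun i => ?_) (by simp [hQ22]; exact hε)
    · rw [hQ1, abs_mul, abs_div, abs_of_nonneg hε, abs_of_pos hG]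
      have hXle : |Xd i u 0| ≤ G := by
        have h1 : Xd i u 0 ^ 2 ≤ G ^ 2 := by
          have h0 : Xd i u 0 ^ 2 ≤ ∑ j, Xd j u 0 ^ 2 :=
            Finset.single_le_sum (f := fun j => Xd j u 0 ^ 2)
              (fun j _ => sq_nonneg _) (Finset.mem_univ i)
          have h2 : (0:ℝ) ≤ ∑ j, Yd j u 0 ^ 2 := by positivity
          linarith [hA]
        exact (pow_le_pow_iff_left₀ (abs_nonneg _) hG.le (by norm_num : 2 ≠ 0)).mp
          (by rwa [sq_abs])
      calc ε / G * |Xd i u 0| ≤ ε / G * G :=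
            mul_le_mul_of_nonneg_left hXle (by positivity)
        _ = ε := by field_simp
    · rw [hQ21, abs_mul, abs_div, abs_of_nonneg hε, abs_of_pos hG]
      have hYle : |Yd i u 0| ≤ G := by
        have h1 : Yd i u 0 ^ 2 ≤ G ^ 2 := by
          have h0 : Yd i u 0 ^ 2 ≤ ∑ j, Yd j u 0 ^ 2 :=
            Finset.single_le_sum (f := fun j => Yd j u 0 ^ 2)
              (fun j _ => sq_nonneg _) (Finset.mem_univ i)
          have h2 : (0:ℝ) ≤ ∑ j, Xd j u 0 ^ 2 := by positivity
          linarith [hA]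
        exact (pow_le_pow_iff_left₀ (abs_nonneg _) hG.le (by norm_num : 2 ≠ 0)).mp
          (by rwa [sq_abs])
      calc ε / G * |Yd i u 0| ≤ ε / G * G :=
            mul_le_mul_of_nonneg_left hYle (by positivity)
        _ = ε := by field_simp
  -- lower bound, eventually
  have hlower : ∀ δ : ℝ, 0 < δ → ∀ᶠ ε in 𝓝[>] (0:ℝ), (G - δ) * ε ≤ num ε := by
    intro δ hδ
    obtain ⟨r, hr, hball⟩ := heis_littleO u hdiff (δ/3) (by positivity)
    set ε₁ : ℝ := min ε₀ (min 1 (min r (δ / (3 * (|c| + 1))))) with hε₁def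
    have hε₁ : 0 < ε₁ := by
      refine lt_min hε₀ (lt_min one_pos (lt_min hr (by positivity)))
    have hevent : Set.Ioo (0:ℝ) ε₁ ∈ 𝓝[>] (0:ℝ) :=
      Ioo_mem_nhdsGT_of_mem ⟨le_refl 0, hε₁⟩
    filter_upwards [hevent] with ε hε
    have hε0 : 0 < ε := hε.1
    have hεε₀ : ε < ε₀ := lt_of_lt_of_le hε.2 (min_le_left _ _)
    have hε1 : ε ≤ 1 := le_of_lt (lt_of_lt_of_le hε.2 (le_trans (min_le_right _ _) (min_le_left _ _)))
    have hεr : ε < r := lt_of_lt_of_le hε.2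
      (le_trans (min_le_right _ _) (le_trans (min_le_right _ _) (min_le_left _ _)))
    have hεδ : ε ≤ δ / (3 * (|c| + 1)) := le_of_lt (lt_of_lt_of_le hε.2
      (le_trans (min_le_right _ _) (le_trans (min_le_right _ _) (min_le_right _ _))))
    have hIoo : ε ∈ Set.Ioo (0:ℝ) ε₀ := ⟨hε0, hεε₀⟩
    have hnP : ‖Pmax ε‖ ≤ ε := hnormP ε hIoo hε1
    have hnQ : ‖Q ε‖ ≤ ε := hnormQ ε hε0.le
    have e1 := hball (Pmax ε) (lt_of_le_of_lt hnP hεr)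
    have e2 := hball (Q ε) (lt_of_le_of_lt hnQ hεr)
    have e3 : u (Q ε) ≤ u (Pmax ε) := hmax ε hIoo (hQmem ε hε0.le)
    have e4 : f (Pmax ε) = num ε + (Pmax ε).2.2 * c := hfP (Pmax ε)
    have e5 : f (Q ε) = ε * G := hfQ ε
    obtain ⟨_, htP⟩ := heis_bounds_of_mem (Pmax ε) ε (hmem ε hIoo)
    have htc : |(Pmax ε).2.2 * c| ≤ (δ/3) * ε := by
      rw [abs_mul]
      calc |(Pmax ε).2.2| * |c| ≤ ε ^ 2 * |c| :=
            mul_le_mul_of_nonneg_right htP (abs_nonneg _)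
        _ = ε * (ε * |c|) := by ring
        _ ≤ ε * (δ/3) := by
            refine mul_le_mul_of_nonneg_left ?_ hε0.le
            have h1 : ε * |c| ≤ (δ / (3 * (|c| + 1))) * |c| :=
              mul_le_mul_of_nonneg_right hεδ (abs_nonneg _)
            have h2 : (δ / (3 * (|c| + 1))) * |c| ≤ δ/3 := by
              rw [div_mul_eq_mul_div, div_le_div_iff₀ (by positivity) (by norm_num)]
              nlinarith [abs_nonneg c]
            linarith
        _ = (δ/3) * ε := by ring
    have a1 : |u (Pmax ε) - u 0 - f (Pmax ε)| ≤ (δ/3) * ε := by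
      refine le_trans e1 ?_
      exact mul_le_mul_of_nonneg_left hnP (by positivity)
    have a2 : |u (Q ε) - u 0 - f (Q ε)| ≤ (δ/3) * ε := by
      refine le_trans e2 ?_
      exact mul_le_mul_of_nonneg_left hnQ (by positivity)
    rw [abs_le] at a1 a2 htc
    have final : ε * G - δ * ε ≤ num ε := by
      have := e4; have := e5
      nlinarith [a1.1, a1.2, a2.1, a2.2, htc.1, htc.2, e3]
    nlinarith [final]
  -- convergence of num ε / ε to G
  have hphi : Tendsto (fun ε => num ε / ε) (𝓝[>] (0:ℝ)) (𝓝 G) := by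
    rw [Metric.tendsto_nhds]
    intro δ hδ
    have hevent : Set.Ioo (0:ℝ) ε₀ ∈ 𝓝[>] (0:ℝ) :=
      Ioo_mem_nhdsGT_of_mem ⟨le_refl 0, hε₀⟩
    filter_upwards [hlower (δ/2) (by positivity), hevent] with ε h1 h2
    have hε0 : 0 < ε := h2.1
    have hup : num ε / ε ≤ G := by
      rw [div_le_iff₀ hε0]
      calc num ε ≤ G * ε := hupper ε h2
        _ = G * ε := rfl
    have hlo : G - δ/2 ≤ num ε / ε := by
      rw [le_div_iff₀ hε0]; exact h1
    rw [Real.dist_eq, abs_lt]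
    constructor <;> linarith
  -- final componentwise convergence
  intro i
  have hmain : ∀ δ : ℝ, 0 < δ → ∀ᶠ ε in 𝓝[>] (0:ℝ),
      |(Pmax ε).1 i / ε - Xd i u 0 / G| < δ ∧
      |(Pmax ε).2.1 i / ε - Yd i u 0 / G| < δ := by
    intro δ hδ
    have hδ' : (0:ℝ) < G * δ ^ 2 / 2 := by positivity
    have hevent : Set.Ioo (0:ℝ) ε₀ ∈ 𝓝[>] (0:ℝ) :=
      Ioo_mem_nhdsGT_of_mem ⟨le_refl 0, hε₀⟩
    have hphi' := (Metric.tendsto_nhds.mp hphi) (G * δ ^ 2 / 2) hδ'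
    filter_upwards [hphi', hevent] with ε h1 h2
    have hε0 : 0 < ε := h2.1
    obtain ⟨hSP, _⟩ := heis_bounds_of_mem (Pmax ε) ε (hmem ε h2)
    have hzw : (∑ j, ((Pmax ε).1 j / ε) ^ 2) + ∑ j, ((Pmax ε).2.1 j / ε) ^ 2 ≤ 1 := by
      have e : ∀ p : Fin n → ℝ, ∑ j, (p j / ε) ^ 2 = (∑ j, p j ^ 2) / ε ^ 2 := by
        intro p
        rw [Finset.sum_div]
        exact Finset.sum_congr rfl fun j _ => by rw [div_pow]
      rw [e, e, ← add_div, div_le_one (by positivity)]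
      exact hSP
    have hkey := heis_dir_bound (fun j => Xd j u 0) (fun j => Yd j u 0)
      (fun j => (Pmax ε).1 j / ε) (fun j => (Pmax ε).2.1 j / ε) G hG hA hzw i
    have hnum : ((∑ j, Xd j u 0 * ((Pmax ε).1 j / ε)) +
        ∑ j, Yd j u 0 * ((Pmax ε).2.1 j / ε)) = num ε / ε := by
      have e : ∀ p q : Fin n → ℝ, ∑ j, p j * (q j / ε) = (∑ j, p j * q j) / ε := by
        intro p q
        rw [Finset.sum_div]
        exact Finset.sum_congr rfl fun j _ => by ring
      rw [e, e, ← add_div]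
    rw [hnum] at hkey
    have hdist : |num ε / ε - G| < G * δ ^ 2 / 2 := by
      rw [← Real.dist_eq]; exact h1
    have hup : 2 - (2 / G) * (num ε / ε) < δ ^ 2 := by
      have h3 : G - num ε / ε < G * δ ^ 2 / 2 := by
        have := abs_lt.mp hdist
        linarith [this.1]
      have h4 : 2 - (2 / G) * (num ε / ε) = (2 / G) * (G - num ε / ε) := by
        field_simp
      rw [h4]
      calc (2 / G) * (G - num ε / ε) < (2 / G) * (G * δ ^ 2 / 2) := by
            exact mul_lt_mul_of_pos_left h3 (by positivity)
        _ = δ ^ 2 := by field_simp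
    have hx2 : ((Pmax ε).1 i / ε - Xd i u 0 / G) ^ 2 < δ ^ 2 := by
      nlinarith [sq_nonneg ((Pmax ε).2.1 i / ε - Yd i u 0 / G)]
    have hy2 : ((Pmax ε).2.1 i / ε - Yd i u 0 / G) ^ 2 < δ ^ 2 := by
      nlinarith [sq_nonneg ((Pmax ε).1 i / ε - Xd i u 0 / G)]
    exact ⟨heis_abs_lt hδ hx2, heis_abs_lt hδ hy2⟩
  constructor
  · rw [Metric.tendsto_nhds]
    intro δ hδ
    filter_upwards [hmain δ hδ] with ε h
    rw [Real.dist_eq]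
    exact h.1
  · rw [Metric.tendsto_nhds]
    intro δ hδ
    filter_upwards [hmain δ hδ] with ε h
    rw [Real.dist_eq]
    exact h.2
end
end

section
/- Let u be C¹ near 0 with ∇_ℍ u(0) ≠ 0, and for small ε>0 let P_ε=(x_ε,y_ε,t_ε) be a point of maximum of u on the closed gauge ball B̄(0,ε). Then |t_ε|/ε³ → 2|∂_t u(0)| / |∇_ℍ u(0)| as ε→0. -/
open MeasureTheory Filter Topology

noncomputable section

namespace HeisAux

/-- fourth power of the gauge -/
def rho {n : ℕ} (P : Heis n) : ℝ :=
  ((∑ i, (P.1 i) ^ 2) + ∑ i, (P.2.1 i) ^ 2) ^ 2 + (P.2.2) ^ 2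

/-- the horizontal square norm -/
def sfn {n : ℕ} (P : Heis n) : ℝ := (∑ i, (P.1 i) ^ 2) + ∑ i, (P.2.1 i) ^ 2

lemma sfn_nonneg {n : ℕ} (P : Heis n) : 0 ≤ sfn P := by
  have h1 : (0:ℝ) ≤ ∑ i, (P.1 i) ^ 2 := Finset.sum_nonneg fun i _ => sq_nonneg _
  have h2 : (0:ℝ) ≤ ∑ i, (P.2.1 i) ^ 2 := Finset.sum_nonneg fun i _ => sq_nonneg _
  exact add_nonneg h1 h2

lemma hMul_one {n : ℕ} (Q : Heis n) : hMul (hInv (hOne : Heis n)) Q = Q := by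
  simp [hMul, hInv, hOne]

lemma rho_nonneg {n : ℕ} (P : Heis n) : 0 ≤ rho P :=
  add_nonneg (sq_nonneg _) (sq_nonneg _)

lemma mem_closedBall_iff {n : ℕ} (ε : ℝ) (hε : 0 < ε) (Q : Heis n) :
    Q ∈ hClosedBall (hOne : Heis n) ε ↔ rho Q ≤ ε ^ 4 := by
  have h0 : hGauge (hMul (hInv (hOne : Heis n)) Q) = (rho Q) ^ ((1:ℝ)/4) := by
    rw [hMul_one]; rfl
  simp only [hClosedBall, Set.mem_setOf_eq, h0]
  constructor
  · intro h
    have h4 : ((rho Q) ^ ((1:ℝ)/4)) ^ (4:ℕ) ≤ ε ^ (4:ℕ) :=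
      pow_le_pow_left₀ (Real.rpow_nonneg (rho_nonneg Q) _) h 4
    calc rho Q = ((rho Q) ^ ((1:ℝ)/4)) ^ (4:ℕ) := by
          rw [← Real.rpow_natCast ((rho Q) ^ ((1:ℝ)/4)) 4, ← Real.rpow_mul (rho_nonneg Q)]
          norm_num
      _ ≤ ε ^ 4 := h4
  · intro h
    have h1 : (rho Q) ^ ((1:ℝ)/4) ≤ (ε ^ (4:ℕ)) ^ ((1:ℝ)/4) :=
      Real.rpow_le_rpow (rho_nonneg Q) h (by norm_num)
    calc (rho Q) ^ ((1:ℝ)/4) ≤ (ε ^ (4:ℕ)) ^ ((1:ℝ)/4) := h1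
      _ = ε := by
          rw [← Real.rpow_natCast ε 4, ← Real.rpow_mul hε.le]
          norm_num

/-- coordinate functionals -/
def XC {n : ℕ} (i : Fin n) : Heis n →L[ℝ] ℝ :=
  (ContinuousLinearMap.proj i).comp (ContinuousLinearMap.fst ℝ (Fin n → ℝ) ((Fin n → ℝ) × ℝ))
def YC {n : ℕ} (i : Fin n) : Heis n →L[ℝ] ℝ :=
  ((ContinuousLinearMap.proj i).comp (ContinuousLinearMap.fst ℝ (Fin n → ℝ) ℝ)).comp
    (ContinuousLinearMap.snd ℝ (Fin n → ℝ) ((Fin n → ℝ) × ℝ))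
def TC {n : ℕ} : Heis n →L[ℝ] ℝ :=
  (ContinuousLinearMap.snd ℝ (Fin n → ℝ) ℝ).comp
    (ContinuousLinearMap.snd ℝ (Fin n → ℝ) ((Fin n → ℝ) × ℝ))

@[simp] lemma XC_apply {n : ℕ} (i : Fin n) (v : Heis n) : XC i v = v.1 i := rfl
@[simp] lemma YC_apply {n : ℕ} (i : Fin n) (v : Heis n) : YC i v = v.2.1 i := rfl
@[simp] lemma TC_apply {n : ℕ} (v : Heis n) : TC v = v.2.2 := rfl

/-- derivative of `rho` -/
def rhoD {n : ℕ} (P : Heis n) : Heis n →L[ℝ] ℝ :=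
  (4 * sfn P) • ((∑ i, (P.1 i) • XC i) + ∑ i, (P.2.1 i) • YC i) + (2 * P.2.2) • TC

lemma rhoD_apply {n : ℕ} (P v : Heis n) :
    rhoD P v = 4 * sfn P * ((∑ i, P.1 i * v.1 i) + ∑ i, P.2.1 i * v.2.1 i)
      + 2 * P.2.2 * v.2.2 := by
  simp only [rhoD, ContinuousLinearMap.add_apply, ContinuousLinearMap.smul_apply,
    ContinuousLinearMap.coe_sum', Finset.sum_apply, XC_apply, YC_apply, TC_apply, smul_eq_mul]

lemma hasStrictFDerivAt_sfn {n : ℕ} (P : Heis n) :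
    HasStrictFDerivAt (sfn (n := n))
      ((∑ i, ((XC i P) • XC i + (XC i P) • XC i)) +
        ∑ i, ((YC i P) • YC i + (YC i P) • YC i)) P := by
  have e : sfn (n := n) = fun Q => (∑ i, Q.1 i * Q.1 i) + ∑ i, Q.2.1 i * Q.2.1 i := by
    funext Q; simp [sfn, pow_two]
  rw [e]
  exact (HasStrictFDerivAt.fun_sum (u := Finset.univ)
      (fun i _ => ((XC i).hasStrictFDerivAt (x := P)).fun_mul ((XC i).hasStrictFDerivAt (x := P)))).add
    (HasStrictFDerivAt.fun_sum (u := Finset.univ)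
      (fun i _ => ((YC i).hasStrictFDerivAt (x := P)).fun_mul ((YC i).hasStrictFDerivAt (x := P))))

lemma hasStrictFDerivAt_rho {n : ℕ} (P : Heis n) :
    HasStrictFDerivAt (rho (n := n)) (rhoD P) P := by
  have e : rho (n := n) = fun Q => sfn Q * sfn Q + Q.2.2 * Q.2.2 := by
    funext Q; simp [rho, sfn, pow_two]
  rw [e]
  refine (((hasStrictFDerivAt_sfn P).mul (hasStrictFDerivAt_sfn P)).add
    (((TC (n := n)).hasStrictFDerivAt (x := P)).mul
      ((TC (n := n)).hasStrictFDerivAt (x := P)))).congr_fderiv ?_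
  refine ContinuousLinearMap.ext fun v => ?_
  rw [rhoD_apply]
  simp only [ContinuousLinearMap.add_apply, ContinuousLinearMap.smul_apply,
    ContinuousLinearMap.coe_sum', Finset.sum_apply, XC_apply, YC_apply, TC_apply, smul_eq_mul]
  simp only [← two_mul, ← Finset.mul_sum, sfn]
  ring

end HeisAux

namespace HeisAux

lemma continuous_rho {n : ℕ} : Continuous (rho (n := n)) :=
  continuous_iff_continuousAt.mpr fun Q =>
    (hasStrictFDerivAt_rho Q).hasFDerivAt.continuousAt

lemma sum_mul_single {n : ℕ} (w : Fin n → ℝ) (i : Fin n) :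
    (∑ j, w j * (Pi.single i 1 : Fin n → ℝ) j) = w i := by
  simp [Pi.single_apply, mul_ite, Finset.sum_ite_eq']

lemma rhoD_applyX {n : ℕ} (P : Heis n) (i : Fin n) :
    rhoD P ((Pi.single i 1 : Fin n → ℝ), (0 : Fin n → ℝ), (0:ℝ)) = 4 * sfn P * P.1 i := by
  rw [rhoD_apply]; simp [sum_mul_single]

lemma rhoD_applyY {n : ℕ} (P : Heis n) (i : Fin n) :
    rhoD P ((0 : Fin n → ℝ), (Pi.single i 1 : Fin n → ℝ), (0:ℝ)) = 4 * sfn P * P.2.1 i := by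
  rw [rhoD_apply]; simp [sum_mul_single]

lemma rhoD_applyT {n : ℕ} (P : Heis n) :
    rhoD P ((0 : Fin n → ℝ), (0 : Fin n → ℝ), (1:ℝ)) = 2 * P.2.2 := by
  rw [rhoD_apply]; simp

/-- The key pointwise consequence of the Lagrange multiplier theorem at a maximizer. -/
lemma key {n : ℕ} {u : Heis n → ℝ} {P : Heis n} {A : Heis n →L[ℝ] ℝ} {ε : ℝ}
    (hε : 0 < ε) (hfd : HasFDerivAt u A P) (hstrict : HasStrictFDerivAt u A P)
    (hA : A ≠ 0) (hmemP : P ∈ hClosedBall (hOne : Heis n) ε)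
    (hmaxP : IsMaxOn u (hClosedBall (hOne : Heis n) ε) P) :
    rho P = ε ^ 4 ∧
      |P.2.2| * Real.sqrt ((∑ i, (A ((Pi.single i 1 : Fin n → ℝ), (0:Fin n → ℝ), (0:ℝ))) ^ 2) +
          ∑ i, (A ((0:Fin n → ℝ), (Pi.single i 1 : Fin n → ℝ), (0:ℝ))) ^ 2)
        = 2 * |A ((0 : Fin n → ℝ), (0 : Fin n → ℝ), (1:ℝ))| * (sfn P * Real.sqrt (sfn P)) := by
  -- the maximizer is on the boundary
  have hb : rho P = ε ^ 4 := by
    rcases lt_or_eq_of_le ((mem_closedBall_iff ε hε P).mp hmemP) with hlt | heq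
    · exfalso
      have hop : IsOpen {Q : Heis n | rho Q < ε ^ 4} := isOpen_lt continuous_rho continuous_const
      have hnh : {Q : Heis n | rho Q < ε ^ 4} ∈ 𝓝 P := hop.mem_nhds hlt
      have hloc : IsLocalMax u P := by
        filter_upwards [hnh] with Q hQ
        exact isMaxOn_iff.mp hmaxP Q ((mem_closedBall_iff ε hε Q).mpr hQ.le)
      exact hA (hloc.hasFDerivAt_eq_zero hfd)
    · exact heq
  refine ⟨hb, ?_⟩
  -- Lagrange multipliers
  have hsub : {Q : Heis n | rho Q = rho P} ⊆ hClosedBall (hOne : Heis n) ε := fun Q hQ =>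
    (mem_closedBall_iff ε hε Q).mpr (le_of_eq (by rw [Set.mem_setOf_eq] at hQ; rw [hQ, hb]))
  have hextr : IsLocalExtrOn u {Q : Heis n | rho Q = rho P} P :=
    Or.inr (Filter.mem_of_superset self_mem_nhdsWithin
      (fun Q hQ => isMaxOn_iff.mp hmaxP Q (hsub hQ)))
  obtain ⟨a, b, hab, heq⟩ :=
    hextr.exists_multipliers_of_hasStrictFDerivAt_1d (hasStrictFDerivAt_rho P) hstrict
  -- the multiplier of `u` is nonzero
  have hrhone : rho P ≠ 0 := by rw [hb]; positivity
  have hb0 : b ≠ 0 := by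
    rintro rfl
    have hv : ∃ v : Heis n, rhoD P v ≠ 0 := by
      by_cases ht : P.2.2 = 0
      · have hsf : sfn P ≠ 0 := by
          intro h0
          exact hrhone (by unfold rho; rw [ht, show ((∑ i, (P.1 i) ^ 2) + ∑ i, (P.2.1 i) ^ 2)
            = sfn P from rfl, h0]; ring)
        have hsfpos : 0 < sfn P := lt_of_le_of_ne (sfn_nonneg P) (Ne.symm hsf)
        have hex : ∃ i, P.1 i ≠ 0 ∨ P.2.1 i ≠ 0 := by
          by_contra hc
          push_neg at hc
          apply hsf
          unfold sfn
          rw [Finset.sum_eq_zero (fun i _ => by rw [(hc i).1]; ring),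
            Finset.sum_eq_zero (fun i _ => by rw [(hc i).2]; ring), add_zero]
        obtain ⟨i, hi⟩ := hex
        rcases hi with h | h
        · exact ⟨((Pi.single i 1 : Fin n → ℝ), 0, 0), by
            rw [rhoD_applyX]
            exact mul_ne_zero (mul_ne_zero (by norm_num) hsf) h⟩
        · exact ⟨((0 : Fin n → ℝ), (Pi.single i 1 : Fin n → ℝ), 0), by
            rw [rhoD_applyY]
            exact mul_ne_zero (mul_ne_zero (by norm_num) hsf) h⟩
      · exact ⟨((0 : Fin n → ℝ), (0 : Fin n → ℝ), (1:ℝ)), by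
          rw [rhoD_applyT]; exact mul_ne_zero two_ne_zero ht⟩
    obtain ⟨v, hv⟩ := hv
    have h2 := DFunLike.congr_fun heq v
    simp only [ContinuousLinearMap.add_apply, ContinuousLinearMap.smul_apply, smul_eq_mul,
      zero_mul, add_zero, zero_smul, ContinuousLinearMap.zero_apply] at h2
    have ha : a = 0 := by
      rcases mul_eq_zero.mp h2 with h | h
      · exact h
      · exact absurd h hv
    exact hab (by simp [ha, Prod.ext_iff])
  -- solve for A
  set lam : ℝ := -(a / b) with hlam
  have hAv : ∀ v : Heis n, A v = lam * rhoD P v := by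
    intro v
    have h2 := DFunLike.congr_fun heq v
    simp only [ContinuousLinearMap.add_apply, ContinuousLinearMap.smul_apply, smul_eq_mul,
      ContinuousLinearMap.zero_apply] at h2
    rw [hlam]
    field_simp
    linarith [h2]
  -- compute the horizontal gradient norm
  have hsum : (∑ i, (A ((Pi.single i 1 : Fin n → ℝ), (0:Fin n → ℝ), (0:ℝ))) ^ 2) +
      ∑ i, (A ((0:Fin n → ℝ), (Pi.single i 1 : Fin n → ℝ), (0:ℝ))) ^ 2
      = (lam * (4 * sfn P)) ^ 2 * sfn P := by
    have e1 : ∀ w : Fin n → ℝ, (∑ i, (lam * (4 * sfn P * w i)) ^ 2)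
        = (lam * (4 * sfn P)) ^ 2 * ∑ i, (w i) ^ 2 := fun w => by
      rw [Finset.mul_sum]; exact Finset.sum_congr rfl fun i _ => by ring
    simp only [hAv, rhoD_applyX, rhoD_applyY]
    rw [e1, e1, ← mul_add]
    rfl
  rw [hsum, Real.sqrt_mul (sq_nonneg _), Real.sqrt_sq_eq_abs, hAv, rhoD_applyT]
  rw [abs_mul, abs_mul, abs_mul, abs_mul, abs_of_nonneg (sfn_nonneg P)]
  rw [abs_of_nonneg (by norm_num : (0:ℝ) ≤ 4), abs_of_nonneg (by norm_num : (0:ℝ) ≤ 2)]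
  ring

end HeisAux

open HeisAux

set_option maxHeartbeats 1000000 in
/-- Vertical component of maximizers: if `∇_ℍ u(0) ≠ 0` and `P_ε = (x_ε, y_ε, t_ε)`
maximizes `u` over `B̄(0,ε)`, then `|t_ε|/ε³ → 2|∂_t u(0)|/|∇_ℍ u(0)|` as `ε → 0⁺`. -/
theorem maximizer_vertical_component (n : ℕ) (u : Heis n → ℝ) (hu : ContDiffAt ℝ 1 u 0)
    (hgrad : ((fun i => Xd i u 0, fun i => Yd i u 0) : (Fin n → ℝ) × (Fin n → ℝ)) ≠ 0)
    (ε₀ : ℝ) (hε₀ : 0 < ε₀) (Pmax : ℝ → Heis n)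
    (hmem : ∀ ε ∈ Set.Ioo (0:ℝ) ε₀, Pmax ε ∈ hClosedBall (hOne : Heis n) ε)
    (hmax : ∀ ε ∈ Set.Ioo (0:ℝ) ε₀, IsMaxOn u (hClosedBall (hOne : Heis n) ε) (Pmax ε)) :
    Tendsto (fun ε => |(Pmax ε).2.2| / ε ^ 3) (𝓝[>] (0:ℝ))
      (𝓝 (2 * |Td u 0| / hGradNorm u 0)) := by
  classical
  obtain ⟨f', U, hU, hf'c, hf'⟩ := contDiffAt_one_iff.mp hu
  obtain ⟨V, hV, hVcd⟩ := hu.contDiffOn le_rfl (by simp)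
  set W := interior (U ∩ V) with hWdef
  have hWnhds : W ∈ 𝓝 (0 : Heis n) := interior_mem_nhds.mpr (Filter.inter_mem hU hV)
  have hWU : W ⊆ U := fun P hP => (interior_subset hP).1
  have hWV : W ⊆ V := fun P hP => (interior_subset hP).2
  have hstrictW : ∀ P ∈ W, HasStrictFDerivAt u (f' P) P := by
    intro P hP
    have h1 : ContDiffAt ℝ 1 u P :=
      hVcd.contDiffAt (Filter.mem_of_superset (isOpen_interior.mem_nhds hP) hWV)
    exact (h1.hasStrictFDerivAt one_ne_zero).congr_fderiv ((hf' P (hWU hP)).fderiv)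
  set L := f' 0 with hLdef
  have hL : fderiv ℝ u 0 = L := (hf' 0 (mem_of_mem_nhds hU)).fderiv
  set vT : Heis n := ((0 : Fin n → ℝ), (0 : Fin n → ℝ), (1:ℝ)) with hvT
  set vX : Fin n → Heis n :=
    fun i => ((Pi.single i 1 : Fin n → ℝ), (0 : Fin n → ℝ), (0:ℝ)) with hvX
  set vY : Fin n → Heis n :=
    fun i => ((0 : Fin n → ℝ), (Pi.single i 1 : Fin n → ℝ), (0:ℝ)) with hvY
  have hXd : ∀ i, Xd i u 0 = L (vX i) := by
    intro i
    unfold Xd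
    rw [hL, hvX]
    norm_num
  have hYd : ∀ i, Yd i u 0 = L (vY i) := by
    intro i
    unfold Yd
    rw [hL, hvY]
    norm_num
  have hTd : Td u 0 = L vT := by unfold Td; rw [hL, hvT]
  -- positivity of the horizontal gradient at 0
  have hGsq_pos : 0 < (∑ i, (L (vX i)) ^ 2) + ∑ i, (L (vY i)) ^ 2 := by
    by_contra hc
    push_neg at hc
    have hx : (0:ℝ) ≤ ∑ i, (L (vX i)) ^ 2 := Finset.sum_nonneg fun i _ => sq_nonneg _
    have hy : (0:ℝ) ≤ ∑ i, (L (vY i)) ^ 2 := Finset.sum_nonneg fun i _ => sq_nonneg _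
    have hx0 : ∑ i, (L (vX i)) ^ 2 = 0 := le_antisymm (by linarith) hx
    have hy0 : ∑ i, (L (vY i)) ^ 2 = 0 := le_antisymm (by linarith) hy
    apply hgrad
    rw [Prod.ext_iff]
    constructor
    · funext i
      have := (Finset.sum_eq_zero_iff_of_nonneg fun i _ => sq_nonneg (L (vX i))).mp hx0 i
        (Finset.mem_univ i)
      have h2 : L (vX i) = 0 := by
        have := pow_eq_zero_iff (n := 2) (by norm_num) |>.mp this
        exact this
      simp [hXd i, h2]
    · funext i
      have := (Finset.sum_eq_zero_iff_of_nonneg fun i _ => sq_nonneg (L (vY i))).mp hy0 i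
        (Finset.mem_univ i)
      have h2 : L (vY i) = 0 := pow_eq_zero_iff (n := 2) (by norm_num) |>.mp this
      simp [hYd i, h2]
  have hGdef : hGradNorm u 0 = Real.sqrt ((∑ i, (L (vX i)) ^ 2) + ∑ i, (L (vY i)) ^ 2) := by
    unfold hGradNorm
    rw [show (∑ i, (Xd i u 0) ^ 2) = ∑ i, (L (vX i)) ^ 2 from
        Finset.sum_congr rfl fun i _ => by rw [hXd i],
      show (∑ i, (Yd i u 0) ^ 2) = ∑ i, (L (vY i)) ^ 2 from
        Finset.sum_congr rfl fun i _ => by rw [hYd i]]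
  have hGpos : 0 < hGradNorm u 0 := by rw [hGdef]; exact Real.sqrt_pos.mpr hGsq_pos
  set l := 𝓝[>] (0:ℝ) with hldef
  have hIoo : ∀ᶠ ε in l, ε ∈ Set.Ioo (0:ℝ) ε₀ := Ioo_mem_nhdsGT_of_mem ⟨le_rfl, hε₀⟩
  have hid : Tendsto (fun ε : ℝ => ε) l (𝓝 0) := tendsto_id.mono_left nhdsWithin_le_nhds
  have rho_eq : ∀ P : Heis n, rho P = sfn P ^ 2 + P.2.2 ^ 2 := fun P => rfl
  have hrho_le : ∀ᶠ ε in l, rho (Pmax ε) ≤ ε ^ 4 := by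
    filter_upwards [hIoo] with ε hε
    exact (mem_closedBall_iff ε hε.1 _).mp (hmem ε hε)
  have hsfn_le : ∀ᶠ ε in l, sfn (Pmax ε) ≤ ε ^ 2 := by
    filter_upwards [hrho_le, hIoo] with ε h hε
    rw [rho_eq] at h
    nlinarith [sfn_nonneg (Pmax ε), sq_nonneg ((Pmax ε).2.2), hε.1,
      sq_nonneg (sfn (Pmax ε) + ε ^ 2)]
  have ht_le : ∀ᶠ ε in l, |(Pmax ε).2.2| ≤ ε ^ 2 := by
    filter_upwards [hrho_le, hIoo] with ε h hε
    rw [rho_eq] at h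
    nlinarith [abs_nonneg (Pmax ε).2.2, sq_abs (Pmax ε).2.2, sq_nonneg (sfn (Pmax ε)), hε.1,
      sq_nonneg (|(Pmax ε).2.2| + ε ^ 2)]
  -- convergence of the maximizers to the origin
  have hsq0 : Tendsto (fun ε : ℝ => ε ^ 2) l (𝓝 0) := by
    have := hid.pow 2
    simpa using this
  have hP1 : Tendsto (fun ε => (Pmax ε).1) l (𝓝 0) := by
    rw [tendsto_pi_nhds]
    intro i
    refine squeeze_zero_norm' ?_ hid
    filter_upwards [hsfn_le, hIoo] with ε h hε
    rw [Real.norm_eq_abs]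
    have h1 : ((Pmax ε).1 i) ^ 2 ≤ sfn (Pmax ε) := by
      unfold sfn
      have : ((Pmax ε).1 i) ^ 2 ≤ ∑ j, ((Pmax ε).1 j) ^ 2 :=
        Finset.single_le_sum (f := fun j => ((Pmax ε).1 j) ^ 2) (fun j _ => sq_nonneg _) (Finset.mem_univ i)
      have h2 : (0:ℝ) ≤ ∑ j, ((Pmax ε).2.1 j) ^ 2 := Finset.sum_nonneg fun j _ => sq_nonneg _
      linarith
    nlinarith [abs_nonneg ((Pmax ε).1 i), sq_abs ((Pmax ε).1 i), hε.1,
      sq_nonneg (|(Pmax ε).1 i| + ε)]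
  have hP21 : Tendsto (fun ε => (Pmax ε).2.1) l (𝓝 0) := by
    rw [tendsto_pi_nhds]
    intro i
    refine squeeze_zero_norm' ?_ hid
    filter_upwards [hsfn_le, hIoo] with ε h hε
    rw [Real.norm_eq_abs]
    have h1 : ((Pmax ε).2.1 i) ^ 2 ≤ sfn (Pmax ε) := by
      unfold sfn
      have : ((Pmax ε).2.1 i) ^ 2 ≤ ∑ j, ((Pmax ε).2.1 j) ^ 2 :=
        Finset.single_le_sum (f := fun j => ((Pmax ε).2.1 j) ^ 2) (fun j _ => sq_nonneg _) (Finset.mem_univ i)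
      have h2 : (0:ℝ) ≤ ∑ j, ((Pmax ε).1 j) ^ 2 := Finset.sum_nonneg fun j _ => sq_nonneg _
      linarith
    nlinarith [abs_nonneg ((Pmax ε).2.1 i), sq_abs ((Pmax ε).2.1 i), hε.1,
      sq_nonneg (|(Pmax ε).2.1 i| + ε)]
  have hP22 : Tendsto (fun ε => (Pmax ε).2.2) l (𝓝 0) := by
    refine squeeze_zero_norm' ?_ hsq0
    filter_upwards [ht_le] with ε h
    rwa [Real.norm_eq_abs]
  have hP0 : Tendsto Pmax l (𝓝 (0 : Heis n)) := by
    have := hP1.prodMk_nhds (hP21.prodMk_nhds hP22)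
    exact this
  have hWev : ∀ᶠ ε in l, Pmax ε ∈ W := hP0 hWnhds
  have hAt : Tendsto (fun ε => f' (Pmax ε)) l (𝓝 L) := ((hf'c.continuousAt hU).tendsto).comp hP0
  have hev : ∀ v : Heis n, Tendsto (fun ε => f' (Pmax ε) v) l (𝓝 (L v)) := by
    intro v
    have h := ((ContinuousLinearMap.apply ℝ ℝ v).continuous.tendsto L).comp hAt
    exact h
  have hC : Tendsto (fun ε => f' (Pmax ε) vT) l (𝓝 (L vT)) := hev vT
  have hGf : Tendsto
      (fun ε => Real.sqrt ((∑ i, (f' (Pmax ε) (vX i)) ^ 2) + ∑ i, (f' (Pmax ε) (vY i)) ^ 2)) l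
      (𝓝 (hGradNorm u 0)) := by
    rw [hGdef]
    exact ((tendsto_finset_sum _ fun i _ => (hev (vX i)).pow 2).add
      (tendsto_finset_sum _ fun i _ => (hev (vY i)).pow 2)).sqrt
  have hGfpos : ∀ᶠ ε in l,
      0 < Real.sqrt ((∑ i, (f' (Pmax ε) (vX i)) ^ 2) + ∑ i, (f' (Pmax ε) (vY i)) ^ 2) :=
    hGf.eventually (eventually_gt_nhds hGpos)
  -- the key identity from Lagrange multipliers
  have hKey : ∀ᶠ ε in l, rho (Pmax ε) = ε ^ 4 ∧
      |(Pmax ε).2.2| * Real.sqrt ((∑ i, (f' (Pmax ε) (vX i)) ^ 2) +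
          ∑ i, (f' (Pmax ε) (vY i)) ^ 2)
        = 2 * |f' (Pmax ε) vT| * (sfn (Pmax ε) * Real.sqrt (sfn (Pmax ε))) := by
    filter_upwards [hIoo, hWev, hGfpos] with ε hε hW hg
    have hfd := hf' _ (hWU hW)
    have hstr := hstrictW _ hW
    have hAne : f' (Pmax ε) ≠ 0 := by
      intro h0
      rw [h0] at hg
      simp at hg
    exact key hε.1 hfd hstr hAne (hmem ε hε) (hmax ε hε)
  -- `t/ε² → 0`
  have hbound0 : Tendsto
      (fun ε => 2 * |f' (Pmax ε) vT| /
        Real.sqrt ((∑ i, (f' (Pmax ε) (vX i)) ^ 2) + ∑ i, (f' (Pmax ε) (vY i)) ^ 2) * ε) l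
      (𝓝 0) := by
    have h := ((hC.abs.const_mul 2).div hGf hGpos.ne').mul hid
    simpa using h
  have ht2 : Tendsto (fun ε => (Pmax ε).2.2 / ε ^ 2) l (𝓝 0) := by
    refine squeeze_zero_norm' ?_ hbound0
    filter_upwards [hKey, hIoo, hGfpos, hsfn_le] with ε hk hε hg hs
    set G := Real.sqrt ((∑ i, (f' (Pmax ε) (vX i)) ^ 2) + ∑ i, (f' (Pmax ε) (vY i)) ^ 2) with hGd
    have hSs : sfn (Pmax ε) * Real.sqrt (sfn (Pmax ε)) ≤ ε ^ 3 := by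
      have h1 : Real.sqrt (sfn (Pmax ε)) ≤ ε := by
        have := Real.sqrt_le_sqrt hs
        rwa [show (ε:ℝ) ^ 2 = ε * ε by ring, Real.sqrt_mul_self hε.1.le] at this
      have h2 : (0:ℝ) ≤ Real.sqrt (sfn (Pmax ε)) := Real.sqrt_nonneg _
      nlinarith [sfn_nonneg (Pmax ε), hε.1]
    have h1 : |(Pmax ε).2.2| * G ≤ 2 * |f' (Pmax ε) vT| * ε ^ 3 := by
      rw [hk.2]
      have : (0:ℝ) ≤ 2 * |f' (Pmax ε) vT| := by positivity
      nlinarith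
    rw [Real.norm_eq_abs, abs_div, abs_of_nonneg (by positivity : (0:ℝ) ≤ ε ^ 2),
      div_le_iff₀ (pow_pos hε.1 2)]
    rw [div_mul_eq_mul_div, div_mul_eq_mul_div, le_div_iff₀ hg]
    calc |(Pmax ε).2.2| * G ≤ 2 * |f' (Pmax ε) vT| * ε ^ 3 := h1
      _ = 2 * |f' (Pmax ε) vT| * ε * ε ^ 2 := by ring
  -- `sfn/ε² → 1`
  have hqeq : ∀ᶠ ε in l,
      Real.sqrt (1 - ((Pmax ε).2.2 / ε ^ 2) ^ 2) = sfn (Pmax ε) / ε ^ 2 := by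
    filter_upwards [hKey, hIoo] with ε hk hε
    have hSf : sfn (Pmax ε) ^ 2 = ε ^ 4 - (Pmax ε).2.2 ^ 2 := by
      have h := hk.1
      rw [rho_eq] at h
      linarith
    have he : 1 - ((Pmax ε).2.2 / ε ^ 2) ^ 2 = (sfn (Pmax ε) / ε ^ 2) ^ 2 := by
      have hε2 : (ε:ℝ) ≠ 0 := hε.1.ne'
      field_simp
      nlinarith [hSf]
    rw [he, Real.sqrt_sq (by exact div_nonneg (sfn_nonneg _) (by positivity))]
  have hq : Tendsto (fun ε => sfn (Pmax ε) / ε ^ 2) l (𝓝 1) := by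
    have h2 : Tendsto (fun ε => Real.sqrt (1 - ((Pmax ε).2.2 / ε ^ 2) ^ 2)) l (𝓝 1) := by
      have := (tendsto_const_nhds (x := (1:ℝ)) (f := l)).sub (ht2.pow 2)
      have h3 := this.sqrt
      simpa using h3
    exact h2.congr' hqeq
  -- final identity
  have hfin : ∀ᶠ ε in l,
      (2 * |f' (Pmax ε) vT| /
          Real.sqrt ((∑ i, (f' (Pmax ε) (vX i)) ^ 2) + ∑ i, (f' (Pmax ε) (vY i)) ^ 2)) *
        ((sfn (Pmax ε) / ε ^ 2) * Real.sqrt (sfn (Pmax ε) / ε ^ 2))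
      = |(Pmax ε).2.2| / ε ^ 3 := by
    filter_upwards [hKey, hIoo, hGfpos] with ε hk hε hg
    set G := Real.sqrt ((∑ i, (f' (Pmax ε) (vX i)) ^ 2) + ∑ i, (f' (Pmax ε) (vY i)) ^ 2) with hGd
    have hsq : Real.sqrt (sfn (Pmax ε) / ε ^ 2) = Real.sqrt (sfn (Pmax ε)) / ε := by
      rw [Real.sqrt_div (sfn_nonneg _), show (ε:ℝ) ^ 2 = ε * ε by ring,
        Real.sqrt_mul_self hε.1.le]
    rw [hsq]
    have hεne : (ε:ℝ) ≠ 0 := hε.1.ne'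
    have hGne : G ≠ 0 := hg.ne'
    have e1 : (2 * |f' (Pmax ε) vT| / G) *
        ((sfn (Pmax ε) / ε ^ 2) * (Real.sqrt (sfn (Pmax ε)) / ε))
        = (2 * |f' (Pmax ε) vT| * (sfn (Pmax ε) * Real.sqrt (sfn (Pmax ε)))) / (G * ε ^ 3) := by
      rw [div_mul_div_comm, div_mul_div_comm, show (ε:ℝ) ^ 2 * ε = ε ^ 3 by ring]
    rw [e1, ← hk.2]
    rw [mul_comm (|(Pmax ε).2.2|) G, mul_div_mul_left _ _ hg.ne']
  -- conclusion
  rw [show (2 * |Td u 0| / hGradNorm u 0) =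
      (2 * |L vT| / hGradNorm u 0) * (1 * Real.sqrt 1) by rw [Real.sqrt_one, hTd]; ring]
  exact Tendsto.congr' hfin
    (((hC.abs.const_mul 2).div hGf hGpos.ne').mul (hq.mul hq.sqrt))
end
end

section
/- Let φ be C² near 0 ∈ ℝ^{2n+1}, and let P_{ε,M}=(x_{ε},y_{ε},t_{ε}) maximize φ on B̄(0,ε). Then φ(P_{ε,M}) + φ(−P_{ε,M}) = 2φ(0) + ⟨D²_ℍφ(0)(x_ε,y_ε),(x_ε,y_ε)⟩ + o(ε²) as ε→0, and consequently max_{B̄(0,ε)}φ + min_{B̄(0,ε)}φ ≤ 2φ(0) + ⟨D²_ℍφ(0)(x_ε,y_ε),(x_ε,y_ε)⟩ + o(ε²). -/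
open MeasureTheory Filter Topology

noncomputable section

section Aux
open Asymptotics

variable {E : Type*} [NormedAddCommGroup E] [NormedSpace ℝ E]

lemma eventually_hasFDerivAt {f : E → ℝ} {x : E} (hf : ContDiffAt ℝ 2 f x) :
    ∀ᶠ y in 𝓝 x, HasFDerivAt f (fderiv ℝ f y) y := by
  obtain ⟨u, hu, h'u⟩ : ∃ u ∈ 𝓝 x, ContDiffOn ℝ 2 f u := hf.contDiffOn le_rfl (by simp)
  rcases mem_nhds_iff.1 hu with ⟨v, vu, v_open, xv⟩
  filter_upwards [v_open.mem_nhds xv] with y hy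
  have : DifferentiableAt ℝ f y := by
    have := (h'u.mono vu y hy).contDiffAt (v_open.mem_nhds hy)
    exact this.differentiableAt (by norm_num)
  exact this.hasFDerivAt

/-- Second-order Peano expansion for `C²` functions. -/
lemma peano_expansion {f : E → ℝ} {x : E} (hf : ContDiffAt ℝ 2 f x) :
    (fun h : E => f (x + h) - f x - fderiv ℝ f x h
        - fderiv ℝ (fderiv ℝ f) x h h / 2) =o[𝓝 0] fun h => ‖h‖ ^ 2 := by
  set f' := fderiv ℝ f with hf'def
  set f'' := fderiv ℝ f' x with hf''def
  have hsymm : ∀ v w, f'' v w = f'' w v := hf.isSymmSndFDerivAt (by simp)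
  have h1 : ContDiffAt ℝ 1 f' x := hf.fderiv_right le_rfl
  have hd2 : HasFDerivAt f' f'' x := (h1.differentiableAt one_ne_zero).hasFDerivAt
  have hev : ∀ᶠ k in 𝓝 (0 : E), HasFDerivAt f (f' (x + k)) (x + k) := by
    have := eventually_hasFDerivAt hf
    rw [← map_add_left_nhds_zero x, eventually_map] at this
    exact this
  rw [isLittleO_iff]
  intro c hc
  have hc2 : 0 < c / 2 := by linarith
  have hlo : ∀ᶠ k in 𝓝 (0 : E), ‖f' (x + k) - f' x - f'' k‖ ≤ c / 2 * ‖k‖ := by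
    have := isLittleO_iff.1 (hasFDerivAt_iff_isLittleO_nhds_zero.1 hd2) hc2
    filter_upwards [this] with k hk using hk
  obtain ⟨r, hr, hball⟩ := Metric.eventually_nhds_iff_ball.1 (hev.and hlo)
  filter_upwards [Metric.ball_mem_nhds (0 : E) hr] with h hh
  have hhr : ‖h‖ < r := by simpa using hh
  set g : E → ℝ := fun k => f (x + k) - f' x k - f'' k k / 2 with hg
  set s : Set E := Metric.closedBall (0 : E) ‖h‖ with hs
  have hsub : ∀ k ∈ s, k ∈ Metric.ball (0 : E) r := by
    intro k hk
    simp only [hs, Metric.mem_closedBall, dist_zero_right] at hk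
    simp only [Metric.mem_ball, dist_zero_right]
    exact lt_of_le_of_lt hk hhr
  have hgderiv : ∀ k ∈ s, HasFDerivWithinAt g (f' (x + k) - f' x - f'' k) s k := by
    intro k hk
    have h1' : HasFDerivAt (fun k : E => f (x + k)) (f' (x + k)) k :=
      (hball k (hsub k hk)).1.comp k ((hasFDerivAt_id k).const_add x)
    have h2' : HasFDerivAt (fun k : E => f' x k) (f' x) k := (f' x).hasFDerivAt
    have h3' : HasFDerivAt (fun k : E => f'' k k)
        ((f'' k).comp (ContinuousLinearMap.id ℝ E) + f''.flip k) k :=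
      (f''.hasFDerivAt).clm_apply (hasFDerivAt_id k)
    have h3'' : HasFDerivAt (fun k : E => f'' k k / 2)
        ((2 : ℝ)⁻¹ • ((f'' k).comp (ContinuousLinearMap.id ℝ E) + f''.flip k)) k := by
      refine (h3'.const_smul (2 : ℝ)⁻¹).congr_of_eventuallyEq
        (Filter.Eventually.of_forall fun y => ?_)
      simp only [Pi.smul_apply, smul_eq_mul]
      ring
    have hD : HasFDerivAt g (f' (x + k) - f' x
        - (2 : ℝ)⁻¹ • ((f'' k).comp (ContinuousLinearMap.id ℝ E) + f''.flip k)) k :=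
      (h1'.sub h2').sub h3''
    have heq : f' (x + k) - f' x
        - (2 : ℝ)⁻¹ • ((f'' k).comp (ContinuousLinearMap.id ℝ E) + f''.flip k)
        = f' (x + k) - f' x - f'' k := by
      ext v
      simp only [ContinuousLinearMap.sub_apply, ContinuousLinearMap.smul_apply,
        ContinuousLinearMap.add_apply, ContinuousLinearMap.coe_comp', Function.comp_apply,
        ContinuousLinearMap.coe_id', id_eq, ContinuousLinearMap.flip_apply, smul_eq_mul]
      rw [hsymm v k]
      ring
    rw [heq] at hD
    exact hD.hasFDerivWithinAt
  have hbound : ∀ k ∈ s, ‖f' (x + k) - f' x - f'' k‖ ≤ c / 2 * ‖h‖ := by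
    intro k hk
    have hk' : ‖k‖ ≤ ‖h‖ := by
      simpa [hs, Metric.mem_closedBall, dist_zero_right] using hk
    calc ‖f' (x + k) - f' x - f'' k‖ ≤ c / 2 * ‖k‖ := (hball k (hsub k hk)).2
      _ ≤ c / 2 * ‖h‖ := by gcongr
  have h0s : (0 : E) ∈ s := Metric.mem_closedBall_self (norm_nonneg h)
  have hhs : h ∈ s := by simp [hs, Metric.mem_closedBall]
  have hmvt : ‖g h - g 0‖ ≤ c / 2 * ‖h‖ * ‖h - 0‖ :=
    (convex_closedBall (0 : E) ‖h‖).norm_image_sub_le_of_norm_hasFDerivWithin_le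
      hgderiv hbound h0s hhs
  have hg0 : g 0 = f x := by simp [hg]
  have hgh : g h = f (x + h) - f' x h - f'' h h / 2 := rfl
  rw [hg0, hgh, sub_zero] at hmvt
  have hre : f (x + h) - f x - f' x h - f'' h h / 2
      = f (x + h) - f' x h - f'' h h / 2 - f x := by ring
  rw [hre]
  calc ‖f (x + h) - f' x h - f'' h h / 2 - f x‖ ≤ c / 2 * ‖h‖ * ‖h‖ := by
        linarith [hmvt]
    _ ≤ c * ‖‖h‖ ^ 2‖ := by
        rw [Real.norm_of_nonneg (by positivity)]
        nlinarith [norm_nonneg h]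

lemma abs_le_of_sq_le' {a b : ℝ} (hb : 0 ≤ b) (h : a ^ 2 ≤ b ^ 2) : |a| ≤ b := by
  calc |a| = Real.sqrt (a ^ 2) := (Real.sqrt_sq_eq_abs a).symm
    _ ≤ Real.sqrt (b ^ 2) := Real.sqrt_le_sqrt h
    _ = b := Real.sqrt_sq hb

lemma mem_hClosedBall_one {n : ℕ} {ε : ℝ} {Q : Heis n} :
    Q ∈ hClosedBall (hOne : Heis n) ε ↔ hGauge Q ≤ ε := by
  simp [hClosedBall, hMul, hInv, hOne, hGauge]

lemma neg_mem_hClosedBall_one {n : ℕ} {ε : ℝ} {Q : Heis n}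
    (h : Q ∈ hClosedBall (hOne : Heis n) ε) : -Q ∈ hClosedBall (hOne : Heis n) ε := by
  rw [mem_hClosedBall_one] at h ⊢
  have : hGauge (-Q) = hGauge Q := by
    simp [hGauge, Prod.fst_neg, Prod.snd_neg]
  rwa [this]

lemma ball_bounds {n : ℕ} {ε : ℝ} (hε : 0 < ε) {Q : Heis n}
    (hQ : Q ∈ hClosedBall (hOne : Heis n) ε) :
    (∑ i, Q.1 i ^ 2) + ∑ i, Q.2.1 i ^ 2 ≤ ε ^ 2 ∧ |Q.2.2| ≤ ε ^ 2 := by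
  rw [mem_hClosedBall_one] at hQ
  set S : ℝ := (∑ i, Q.1 i ^ 2) + ∑ i, Q.2.1 i ^ 2 with hS
  have hS0 : 0 ≤ S := by positivity
  set a : ℝ := S ^ 2 + Q.2.2 ^ 2 with ha
  have ha0 : 0 ≤ a := by positivity
  have hQ' : a ^ ((1 : ℝ) / 4) ≤ ε := hQ
  have key : a ≤ ε ^ 4 := by
    have h4 : (a ^ ((1 : ℝ) / 4)) ^ (4 : ℕ) ≤ ε ^ (4 : ℕ) :=
      pow_le_pow_left₀ (Real.rpow_nonneg ha0 _) hQ' 4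
    rw [← Real.rpow_natCast (a ^ ((1 : ℝ) / 4)) 4, ← Real.rpow_mul ha0] at h4
    norm_num at h4
    exact h4
  constructor
  · have hS2 : S ^ 2 ≤ (ε ^ 2) ^ 2 := by nlinarith [sq_nonneg Q.2.2]
    have := abs_le_of_sq_le' (b := ε ^ 2) (by positivity) hS2
    calc S = |S| := (abs_of_nonneg hS0).symm
      _ ≤ ε ^ 2 := this
  · have ht2 : Q.2.2 ^ 2 ≤ (ε ^ 2) ^ 2 := by nlinarith [sq_nonneg S]
    exact abs_le_of_sq_le' (by positivity) ht2

lemma norm_bounds {n : ℕ} {ε : ℝ} (hε : 0 < ε) (hε1 : ε ≤ 1) {Q : Heis n}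
    (hQ : Q ∈ hClosedBall (hOne : Heis n) ε) :
    ‖Q‖ ≤ ε ∧ ‖((Q.1, Q.2.1, 0) : Heis n)‖ ≤ ε ∧ |Q.2.2| ≤ ε ^ 2 := by
  obtain ⟨hSle, htle⟩ := ball_bounds hε hQ
  have hx : ∀ i, |Q.1 i| ≤ ε := by
    intro i
    have h1 : Q.1 i ^ 2 ≤ ε ^ 2 := by
      have h1' : Q.1 i ^ 2 ≤ ∑ x, Q.1 x ^ 2 := by
        simpa using Finset.single_le_sum (f := fun i => Q.1 i ^ 2)
          (fun i _ => sq_nonneg _) (Finset.mem_univ i)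
      have h2 : (0:ℝ) ≤ ∑ i, Q.2.1 i ^ 2 := by positivity
      linarith
    exact abs_le_of_sq_le' hε.le (by nlinarith [sq_abs (Q.1 i)])
  have hy : ∀ i, |Q.2.1 i| ≤ ε := by
    intro i
    have h1 : Q.2.1 i ^ 2 ≤ ε ^ 2 := by
      have h1' : Q.2.1 i ^ 2 ≤ ∑ x, Q.2.1 x ^ 2 := by
        simpa using Finset.single_le_sum (f := fun i => Q.2.1 i ^ 2)
          (fun i _ => sq_nonneg _) (Finset.mem_univ i)
      have h2 : (0:ℝ) ≤ ∑ i, Q.1 i ^ 2 := by positivity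
      linarith
    exact abs_le_of_sq_le' hε.le (by nlinarith [sq_abs (Q.2.1 i)])
  have hxn : ‖Q.1‖ ≤ ε := by
    rw [pi_norm_le_iff_of_nonneg hε.le]
    intro i; simpa using hx i
  have hyn : ‖Q.2.1‖ ≤ ε := by
    rw [pi_norm_le_iff_of_nonneg hε.le]
    intro i; simpa using hy i
  have htn : |Q.2.2| ≤ ε := le_trans htle (by nlinarith)
  refine ⟨?_, ?_, htle⟩
  · rw [Prod.norm_def]
    refine max_le hxn ?_
    rw [Prod.norm_def]
    exact max_le hyn (by simpa using htn)
  · rw [Prod.norm_def]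
    refine max_le hxn ?_
    rw [Prod.norm_def]
    simp only [norm_zero]
    exact max_le hyn hε.le

namespace HQ
variable {n : ℕ}

def E0 (i : Fin n) : Heis n := ((Pi.single i 1 : Fin n → ℝ), 0, 0)
def F0 (i : Fin n) : Heis n := (0, (Pi.single i 1 : Fin n → ℝ), 0)
def T0 : Heis n := (0, 0, 1)

/-- CLM `P ↦ (0, 0, 2 * P.2.1 j)`. -/
def MX (j : Fin n) : Heis n →L[ℝ] Heis n :=
  (0 : Heis n →L[ℝ] (Fin n → ℝ)).prod
    ((0 : Heis n →L[ℝ] (Fin n → ℝ)).prod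
      ((2 : ℝ) • ((ContinuousLinearMap.proj j).comp
        ((ContinuousLinearMap.fst ℝ (Fin n → ℝ) ℝ).comp
          (ContinuousLinearMap.snd ℝ (Fin n → ℝ) ((Fin n → ℝ) × ℝ))))))

/-- CLM `P ↦ (0, 0, -(2 * P.1 j))`. -/
def MY (j : Fin n) : Heis n →L[ℝ] Heis n :=
  (0 : Heis n →L[ℝ] (Fin n → ℝ)).prod
    ((0 : Heis n →L[ℝ] (Fin n → ℝ)).prod
      ((-2 : ℝ) • ((ContinuousLinearMap.proj j).comp
        (ContinuousLinearMap.fst ℝ (Fin n → ℝ) ((Fin n → ℝ) × ℝ)))))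

lemma MX_apply (j : Fin n) (P : Heis n) : MX j P = (0, 0, 2 * P.2.1 j) := by
  simp [MX, ContinuousLinearMap.prod_apply, smul_eq_mul]

lemma MY_apply (j : Fin n) (P : Heis n) : MY j P = (0, 0, -(2 * P.1 j)) := by
  ext <;> simp [MY, ContinuousLinearMap.prod_apply, smul_eq_mul] <;> ring

lemma hasFDerivAt_XdArg (j : Fin n) (P : Heis n) :
    HasFDerivAt (fun P : Heis n => ((Pi.single j 1 : Fin n → ℝ), (0 : Fin n → ℝ),
      2 * P.2.1 j)) (MX j) P := by
  have h := ((MX j).hasFDerivAt (x := P)).const_add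
    (((Pi.single j 1 : Fin n → ℝ), (0 : Fin n → ℝ), (0:ℝ)) : Heis n)
  have heq : (fun P : Heis n => (((Pi.single j 1 : Fin n → ℝ), (0 : Fin n → ℝ), (0:ℝ)) : Heis n)
      + MX j P) = fun P : Heis n => ((Pi.single j 1 : Fin n → ℝ), (0 : Fin n → ℝ),
      2 * P.2.1 j) := by
    funext P
    rw [MX_apply]
    ext <;> simp
  rwa [heq] at h

lemma hasFDerivAt_YdArg (j : Fin n) (P : Heis n) :
    HasFDerivAt (fun P : Heis n => ((0 : Fin n → ℝ), (Pi.single j 1 : Fin n → ℝ),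
      -(2 * P.1 j))) (MY j) P := by
  have h := ((MY j).hasFDerivAt (x := P)).const_add
    ((((0 : Fin n → ℝ)), (Pi.single j 1 : Fin n → ℝ), (0:ℝ)) : Heis n)
  have heq : (fun P : Heis n => (((0 : Fin n → ℝ), (Pi.single j 1 : Fin n → ℝ), (0:ℝ)) : Heis n)
      + MY j P) = fun P : Heis n => ((0 : Fin n → ℝ), (Pi.single j 1 : Fin n → ℝ),
      -(2 * P.1 j)) := by
    funext P
    rw [MY_apply]
    ext <;> simp
  rwa [heq] at h

variable {φ : Heis n → ℝ}

lemma fderiv_Xd (hd2 : HasFDerivAt (fderiv ℝ φ) (fderiv ℝ (fderiv ℝ φ) 0) (0 : Heis n))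
    (j : Fin n) :
    fderiv ℝ (Xd j φ) 0 = (fderiv ℝ φ 0).comp (MX j)
      + (fderiv ℝ (fderiv ℝ φ) 0).flip (E0 j) := by
  have h := hd2.clm_apply (hasFDerivAt_XdArg j 0)
  have : Xd j φ = fun P : Heis n => fderiv ℝ φ P
      ((Pi.single j 1 : Fin n → ℝ), (0 : Fin n → ℝ), 2 * P.2.1 j) := rfl
  rw [this]
  have h2 := h.fderiv
  convert h2 using 3
  ext <;> simp [E0, F0]

lemma fderiv_Yd (hd2 : HasFDerivAt (fderiv ℝ φ) (fderiv ℝ (fderiv ℝ φ) 0) (0 : Heis n))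
    (j : Fin n) :
    fderiv ℝ (Yd j φ) 0 = (fderiv ℝ φ 0).comp (MY j)
      + (fderiv ℝ (fderiv ℝ φ) 0).flip (F0 j) := by
  have h := hd2.clm_apply (hasFDerivAt_YdArg j 0)
  have : Yd j φ = fun P : Heis n => fderiv ℝ φ P
      ((0 : Fin n → ℝ), (Pi.single j 1 : Fin n → ℝ), -(2 * P.1 j)) := rfl
  rw [this]
  have h2 := h.fderiv
  convert h2 using 3
  ext <;> simp [E0, F0]

lemma XdXd_zero (hd2 : HasFDerivAt (fderiv ℝ φ) (fderiv ℝ (fderiv ℝ φ) 0) (0 : Heis n)) (i j : Fin n) :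
    Xd i (Xd j φ) 0 = fderiv ℝ (fderiv ℝ φ) 0 (E0 i) (E0 j) := by
  rw [Xd]
  rw [fderiv_Xd hd2]
  have hdir : ((Pi.single i 1 : Fin n → ℝ), (0 : Fin n → ℝ), 2 * (0 : Heis n).2.1 i)
      = E0 i := by ext <;> simp [E0]
  rw [hdir]
  simp [ContinuousLinearMap.add_apply, ContinuousLinearMap.comp_apply, MX_apply, E0,
    ContinuousLinearMap.flip_apply]
  exact map_zero (fderiv ℝ φ 0)

lemma YdYd_zero (hd2 : HasFDerivAt (fderiv ℝ φ) (fderiv ℝ (fderiv ℝ φ) 0) (0 : Heis n)) (i j : Fin n) :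
    Yd i (Yd j φ) 0 = fderiv ℝ (fderiv ℝ φ) 0 (F0 i) (F0 j) := by
  rw [Yd]
  rw [fderiv_Yd hd2]
  have hdir : ((0 : Fin n → ℝ), (Pi.single i 1 : Fin n → ℝ), -(2 * (0 : Heis n).1 i))
      = F0 i := by ext <;> simp [F0]
  rw [hdir]
  simp [ContinuousLinearMap.add_apply, ContinuousLinearMap.comp_apply, MY_apply, F0,
    ContinuousLinearMap.flip_apply]
  exact map_zero (fderiv ℝ φ 0)

lemma XdYd_zero (hd2 : HasFDerivAt (fderiv ℝ φ) (fderiv ℝ (fderiv ℝ φ) 0) (0 : Heis n)) (i j : Fin n) :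
    Xd i (Yd j φ) 0 = fderiv ℝ (fderiv ℝ φ) 0 (E0 i) (F0 j)
      - 2 * (Pi.single i 1 : Fin n → ℝ) j * fderiv ℝ φ 0 T0 := by
  rw [Xd]
  rw [fderiv_Yd hd2]
  have hdir : ((Pi.single i 1 : Fin n → ℝ), (0 : Fin n → ℝ), 2 * (0 : Heis n).2.1 i)
      = E0 i := by ext <;> simp [E0]
  rw [hdir]
  have hMY : MY j (E0 i) = (-(2 * (Pi.single i 1 : Fin n → ℝ) j)) • (T0 : Heis n) := by
    rw [MY_apply]
    ext <;> simp [E0, T0]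
  simp only [ContinuousLinearMap.add_apply, ContinuousLinearMap.comp_apply, hMY,
    ContinuousLinearMap.flip_apply, _root_.map_smul, smul_eq_mul]
  ring

lemma YdXd_zero (hd2 : HasFDerivAt (fderiv ℝ φ) (fderiv ℝ (fderiv ℝ φ) 0) (0 : Heis n)) (i j : Fin n) :
    Yd i (Xd j φ) 0 = fderiv ℝ (fderiv ℝ φ) 0 (F0 i) (E0 j)
      + 2 * (Pi.single i 1 : Fin n → ℝ) j * fderiv ℝ φ 0 T0 := by
  rw [Yd]
  rw [fderiv_Xd hd2]
  have hdir : ((0 : Fin n → ℝ), (Pi.single i 1 : Fin n → ℝ), -(2 * (0 : Heis n).1 i))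
      = F0 i := by ext <;> simp [F0]
  rw [hdir]
  have hMX : MX j (F0 i) = (2 * (Pi.single i 1 : Fin n → ℝ) j) • (T0 : Heis n) := by
    rw [MX_apply]
    ext <;> simp [F0, T0]
  simp only [ContinuousLinearMap.add_apply, ContinuousLinearMap.comp_apply, hMX,
    ContinuousLinearMap.flip_apply, _root_.map_smul, smul_eq_mul]
  ring

lemma key_single (a : Fin n → ℝ) : (∑ i, a i • (Pi.single i 1 : Fin n → ℝ)) = a := by
  funext b
  simp [Finset.sum_apply, Pi.single_apply]

lemma decomp (v w : Fin n → ℝ) :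
    ((v, w, 0) : Heis n) = ∑ i, (v i • E0 i + w i • F0 i) := by
  have hterm : ∀ i : Fin n, v i • E0 i + w i • F0 i
      = (((v i • (Pi.single i 1 : Fin n → ℝ)), (w i • (Pi.single i 1 : Fin n → ℝ)), (0:ℝ)) :
        Heis n) := by
    intro i; ext <;> simp [E0, F0]
  rw [Finset.sum_congr rfl fun i _ => hterm i]
  calc ((v, w, 0) : Heis n)
      = (∑ i, v i • (Pi.single i 1 : Fin n → ℝ),
          ∑ i, w i • (Pi.single i 1 : Fin n → ℝ), ∑ _i : Fin n, (0:ℝ)) := by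
        rw [key_single v, key_single w, Finset.sum_const_zero]
    _ = (∑ i, v i • (Pi.single i 1 : Fin n → ℝ),
          ∑ i, ((w i • (Pi.single i 1 : Fin n → ℝ)), (0:ℝ))) := by rw [prod_mk_sum]
    _ = ∑ i, (((v i • (Pi.single i 1 : Fin n → ℝ)),
          (w i • (Pi.single i 1 : Fin n → ℝ)), (0:ℝ)) : Heis n) := by rw [prod_mk_sum]

lemma hQuad_eq (hd2 : HasFDerivAt (fderiv ℝ φ) (fderiv ℝ (fderiv ℝ φ) 0) (0 : Heis n))
    (v w : Fin n → ℝ) :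
    hQuad φ 0 v w = fderiv ℝ (fderiv ℝ φ) 0 ((v, w, 0) : Heis n) ((v, w, 0) : Heis n) := by
  set B := fderiv ℝ (fderiv ℝ φ) 0 with hB
  have hterm : ∀ i j : Fin n,
      v i * v j * Xd i (Xd j φ) 0 + v i * w j * Xd i (Yd j φ) 0 +
        w i * v j * Yd i (Xd j φ) 0 + w i * w j * Yd i (Yd j φ) 0
      = (v i * v j * B (E0 i) (E0 j) + v i * w j * B (E0 i) (F0 j) +
          w i * v j * B (F0 i) (E0 j) + w i * w j * B (F0 i) (F0 j)) +
        (2 * (Pi.single i 1 : Fin n → ℝ) j * fderiv ℝ φ 0 T0 * (w i * v j - v i * w j)) := by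
    intro i j
    rw [XdXd_zero hd2, XdYd_zero hd2, YdXd_zero hd2, YdYd_zero hd2]
    ring
  unfold hQuad
  simp_rw [hterm]
  rw [Finset.sum_congr rfl (fun i _ => Finset.sum_add_distrib), Finset.sum_add_distrib]
  have hzero : ∀ i : Fin n, ∑ j,
      2 * (Pi.single i 1 : Fin n → ℝ) j * fderiv ℝ φ 0 T0 * (w i * v j - v i * w j) = 0 := by
    intro i
    rw [Finset.sum_eq_single i]
    · ring
    · intro j _ hji
      simp [Pi.single_apply, Ne.symm hji]
    · simp
  rw [Finset.sum_congr rfl (fun i _ => hzero i)]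
  simp only [Finset.sum_const_zero, add_zero]
  rw [decomp v w]
  rw [show (B (∑ i, (v i • E0 i + w i • F0 i))) = ∑ i, B (v i • E0 i + w i • F0 i) from
    map_sum B _ _]
  rw [ContinuousLinearMap.sum_apply]
  refine Finset.sum_congr rfl fun i _ => ?_
  rw [map_sum]
  refine Finset.sum_congr rfl fun j _ => ?_
  simp only [map_add, _root_.map_smul, ContinuousLinearMap.add_apply, ContinuousLinearMap.smul_apply,
    smul_eq_mul]
  ring

end HQ

end Aux

namespace MainProof
open Asymptotics

set_option maxHeartbeats 2000000 in
theorem main (n : ℕ) (φ : Heis n → ℝ) (hφ : ContDiffAt ℝ 2 φ 0)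
    (ε₀ : ℝ) (hε₀ : 0 < ε₀) (Pm : ℝ → Heis n)
    (hmem : ∀ ε ∈ Set.Ioo (0:ℝ) ε₀, Pm ε ∈ hClosedBall (hOne : Heis n) ε)
    (hmax : ∀ ε ∈ Set.Ioo (0:ℝ) ε₀, IsMaxOn φ (hClosedBall (hOne : Heis n) ε) (Pm ε)) :
    ((fun ε : ℝ => φ (Pm ε) + φ (-(Pm ε)) - 2 * φ 0 - hQuad φ 0 (Pm ε).1 (Pm ε).2.1)
        =o[𝓝[>] (0:ℝ)] fun ε => ε ^ 2) ∧
    Filter.limsup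
        (fun ε : ℝ => (φ (Pm ε) + sInf (φ '' hClosedBall (hOne : Heis n) ε)
            - 2 * φ 0 - hQuad φ 0 (Pm ε).1 (Pm ε).2.1) / ε ^ 2)
        (𝓝[>] (0:ℝ)) ≤ 0 := by
  set f' := fderiv ℝ φ with hf'
  set B := fderiv ℝ f' 0 with hBdef
  have hd2 : HasFDerivAt f' B 0 :=
    (((hφ.fderiv_right le_rfl).differentiableAt one_ne_zero)).hasFDerivAt
  -- Peano expansion at 0
  have A1 : (fun h : Heis n => φ h - φ 0 - f' 0 h - B h h / 2) =o[𝓝 0] fun h => ‖h‖ ^ 2 := by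
    have := peano_expansion hφ
    exact this.congr (fun h => by rw [zero_add]) (fun h => rfl)
  have hneg : Filter.Tendsto (fun h : Heis n => -h) (𝓝 0) (𝓝 0) := by
    simpa using (continuous_neg.tendsto (0 : Heis n))
  have A2 : (fun h : Heis n => φ (-h) - φ 0 + f' 0 h - B h h / 2) =o[𝓝 0]
      fun h => ‖h‖ ^ 2 := by
    have h2 := A1.comp_tendsto hneg
    refine h2.congr (fun h => ?_) (fun h => by simp [Function.comp])
    simp only [Function.comp, map_neg, ContinuousLinearMap.neg_apply, neg_neg]
    ring_nf
  have A3 : (fun h : Heis n => φ h + φ (-h) - 2 * φ 0 - B h h) =o[𝓝 0]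
      fun h => ‖h‖ ^ 2 := by
    have := A1.add A2
    refine this.congr (fun h => by ring) (fun h => rfl)
  -- small-radius eventual facts
  set ε₁ : ℝ := min ε₀ 1 with hε₁
  have hε₁pos : 0 < ε₁ := lt_min hε₀ one_pos
  have hIoo : Set.Ioo (0:ℝ) ε₁ ∈ 𝓝[>] (0:ℝ) :=
    Ioo_mem_nhdsGT_of_mem ⟨le_refl 0, hε₁pos⟩
  have hfacts : ∀ ε ∈ Set.Ioo (0:ℝ) ε₁, ‖Pm ε‖ ≤ ε ∧
      ‖(((Pm ε).1, (Pm ε).2.1, 0) : Heis n)‖ ≤ ε ∧ |(Pm ε).2.2| ≤ ε ^ 2 := by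
    intro ε hε
    have hmem' := hmem ε ⟨hε.1, lt_of_lt_of_le hε.2 (min_le_left _ _)⟩
    exact norm_bounds hε.1 (le_of_lt (lt_of_lt_of_le hε.2 (min_le_right _ _))) hmem'
  have htendsto : Filter.Tendsto Pm (𝓝[>] (0:ℝ)) (𝓝 0) := by
    apply squeeze_zero_norm' (a := fun ε : ℝ => ε)
    · filter_upwards [hIoo] with ε hε using (hfacts ε hε).1
    · exact tendsto_id.mono_left nhdsWithin_le_nhds
  have C1 := A3.comp_tendsto htendsto
  have hO : (fun ε : ℝ => ‖Pm ε‖ ^ 2) =O[𝓝[>] (0:ℝ)] fun ε => ε ^ 2 := by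
    rw [isBigO_iff]
    refine ⟨1, ?_⟩
    filter_upwards [hIoo] with ε hε
    have h1 := (hfacts ε hε).1
    have h2 : (0:ℝ) ≤ ε := hε.1.le
    rw [one_mul, Real.norm_of_nonneg (by positivity), Real.norm_of_nonneg (by positivity)]
    nlinarith [norm_nonneg (Pm ε)]
  have C2 : (fun ε : ℝ => φ (Pm ε) + φ (-(Pm ε)) - 2 * φ 0 - B (Pm ε) (Pm ε))
      =o[𝓝[>] (0:ℝ)] fun ε => ε ^ 2 := by
    have := C1.trans_isBigO hO
    exact this.congr (fun ε => rfl) (fun ε => rfl)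
  -- the vertical correction
  have hsplit : ∀ ε : ℝ, (Pm ε : Heis n)
      = (((Pm ε).1, (Pm ε).2.1, 0) : Heis n) + ((0, 0, (Pm ε).2.2) : Heis n) := by
    intro ε; ext <;> simp
  have hvert : ∀ ε : ℝ, ‖(((0:Fin n → ℝ), (0:Fin n → ℝ), (Pm ε).2.2) : Heis n)‖
      = |(Pm ε).2.2| := by
    intro ε
    rw [Prod.norm_def, Prod.norm_def]
    simp [Real.norm_eq_abs, abs_nonneg]
  have hTbig : (fun ε : ℝ => B (Pm ε) (Pm ε)
        - B (((Pm ε).1, (Pm ε).2.1, 0) : Heis n) (((Pm ε).1, (Pm ε).2.1, 0) : Heis n))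
      =O[𝓝[>] (0:ℝ)] fun ε => ε ^ 3 := by
    rw [isBigO_iff]
    refine ⟨3 * ‖B‖, ?_⟩
    filter_upwards [hIoo] with ε hε
    obtain ⟨h1, h2, h3⟩ := hfacts ε hε
    set H : Heis n := (((Pm ε).1, (Pm ε).2.1, 0) : Heis n) with hH
    set V : Heis n := ((0, 0, (Pm ε).2.2) : Heis n) with hV
    have hPm : Pm ε = H + V := hsplit ε
    have hVn : ‖V‖ ≤ ε ^ 2 := by rw [hV]; rw [hvert ε]; exact h3
    have hεpos : (0:ℝ) < ε := hε.1
    have hε1 : ε ≤ 1 := le_of_lt (lt_of_lt_of_le hε.2 (min_le_right _ _))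
    have hexp : B (Pm ε) (Pm ε) - B H H = B H V + B V H + B V V := by
      rw [hPm]; simp only [map_add, ContinuousLinearMap.add_apply]; ring
    rw [hexp]
    have hB0 : (0:ℝ) ≤ ‖B‖ := ContinuousLinearMap.opNorm_nonneg B
    have e1 : ‖B H V‖ ≤ ‖B‖ * ε * ε ^ 2 := by
      calc ‖B H V‖ ≤ ‖B‖ * ‖H‖ * ‖V‖ := B.le_opNorm₂ H V
        _ ≤ ‖B‖ * ε * ε ^ 2 := by gcongr
    have e2 : ‖B V H‖ ≤ ‖B‖ * ε ^ 2 * ε := by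
      calc ‖B V H‖ ≤ ‖B‖ * ‖V‖ * ‖H‖ := B.le_opNorm₂ V H
        _ ≤ ‖B‖ * ε ^ 2 * ε := by gcongr
    have e3 : ‖B V V‖ ≤ ‖B‖ * ε ^ 2 * ε ^ 2 := by
      calc ‖B V V‖ ≤ ‖B‖ * ‖V‖ * ‖V‖ := B.le_opNorm₂ V V
        _ ≤ ‖B‖ * ε ^ 2 * ε ^ 2 := by gcongr
    rw [Real.norm_of_nonneg (by positivity : (0:ℝ) ≤ ε ^ 3)]
    calc ‖B H V + B V H + B V V‖ ≤ ‖B H V‖ + ‖B V H‖ + ‖B V V‖ := norm_add₃_le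
      _ ≤ ‖B‖ * ε * ε ^ 2 + ‖B‖ * ε ^ 2 * ε + ‖B‖ * ε ^ 2 * ε ^ 2 := by linarith
      _ ≤ 3 * ‖B‖ * ε ^ 3 := by
          have h4 : ε ^ 4 ≤ ε ^ 3 := pow_le_pow_of_le_one hεpos.le hε1 (by norm_num)
          nlinarith [mul_le_mul_of_nonneg_left h4 hB0]
  have hsmall : (fun ε : ℝ => ε ^ 3) =o[𝓝[>] (0:ℝ)] fun ε => ε ^ 2 := by
    rw [isLittleO_iff]
    intro c hc
    have hm : Set.Ioo (0:ℝ) (min c 1) ∈ 𝓝[>] (0:ℝ) :=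
      Ioo_mem_nhdsGT_of_mem ⟨le_refl 0, lt_min hc one_pos⟩
    filter_upwards [hm] with ε hε
    have h1 : 0 < ε := hε.1
    have h2 : ε < c := lt_of_lt_of_le hε.2 (min_le_left _ _)
    rw [Real.norm_of_nonneg (by positivity), Real.norm_of_nonneg (by positivity)]
    nlinarith
  have hT := hTbig.trans_isLittleO hsmall
  have C3 := C2.add hT
  have hquad_eq : ∀ ε : ℝ, hQuad φ 0 (Pm ε).1 (Pm ε).2.1
      = B (((Pm ε).1, (Pm ε).2.1, 0) : Heis n) (((Pm ε).1, (Pm ε).2.1, 0) : Heis n) :=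
    fun ε => HQ.hQuad_eq hd2 (Pm ε).1 (Pm ε).2.1
  have Goal1 : (fun ε : ℝ => φ (Pm ε) + φ (-(Pm ε)) - 2 * φ 0
      - hQuad φ 0 (Pm ε).1 (Pm ε).2.1) =o[𝓝[>] (0:ℝ)] fun ε => ε ^ 2 := by
    refine C3.congr (fun ε => ?_) (fun ε => rfl)
    rw [hquad_eq ε]
    ring
  refine ⟨Goal1, ?_⟩
  -- compactness / lower bound of φ on small balls
  obtain ⟨u, hu, h'u⟩ : ∃ u ∈ 𝓝 (0 : Heis n), ContDiffOn ℝ 2 φ u :=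
    hφ.contDiffOn le_rfl (by simp)
  obtain ⟨δ, hδpos, hδsub⟩ : ∃ δ > (0:ℝ), Metric.closedBall (0 : Heis n) δ ⊆ u := by
    rcases Metric.mem_nhds_iff.1 hu with ⟨r, hr, hsub⟩
    exact ⟨r / 2, by positivity,
      (Metric.closedBall_subset_ball (by linarith)).trans hsub⟩
  have hcont : ContinuousOn φ (Metric.closedBall (0 : Heis n) δ) :=
    (h'u.mono hδsub).continuousOn
  have hcompact : IsCompact (Metric.closedBall (0 : Heis n) δ) :=
    isCompact_closedBall _ _
  set T : ℝ → ℝ := fun ε => (φ (Pm ε) + sInf (φ '' hClosedBall (hOne : Heis n) ε)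
      - 2 * φ 0 - hQuad φ 0 (Pm ε).1 (Pm ε).2.1) / ε ^ 2 with hTdef
  set D : ℝ → ℝ := fun ε => (φ (Pm ε) + φ (-(Pm ε))
      - 2 * φ 0 - hQuad φ 0 (Pm ε).1 (Pm ε).2.1) / ε ^ 2 with hDdef
  have hIoo2 : Set.Ioo (0:ℝ) (min ε₁ δ) ∈ 𝓝[>] (0:ℝ) :=
    Ioo_mem_nhdsGT_of_mem ⟨le_refl 0, lt_min hε₁pos hδpos⟩
  have hTD : ∀ᶠ ε in 𝓝[>] (0:ℝ), T ε ≤ D ε := by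
    filter_upwards [hIoo2] with ε hε
    have hεpos : 0 < ε := hε.1
    have hεε₁ : ε < ε₁ := lt_of_lt_of_le hε.2 (min_le_left _ _)
    have hεδ : ε < δ := lt_of_lt_of_le hε.2 (min_le_right _ _)
    have hε1 : ε ≤ 1 := le_of_lt (lt_of_lt_of_le hεε₁ (min_le_right _ _))
    have hsubball : hClosedBall (hOne : Heis n) ε ⊆ Metric.closedBall (0 : Heis n) δ := by
      intro Q hQ
      have := (norm_bounds hεpos hε1 hQ).1
      rw [Metric.mem_closedBall, dist_zero_right]
      exact this.trans hεδ.le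
    have hbdd : BddBelow (φ '' hClosedBall (hOne : Heis n) ε) := by
      refine BddBelow.mono (Set.image_mono hsubball) ?_
      exact (hcompact.image_of_continuousOn hcont).bddBelow
    have hmemball := hmem ε ⟨hεpos, hεε₁.trans_le (min_le_left _ _)⟩
    have hnegmem : -(Pm ε) ∈ hClosedBall (hOne : Heis n) ε :=
      neg_mem_hClosedBall_one hmemball
    have hsInf : sInf (φ '' hClosedBall (hOne : Heis n) ε) ≤ φ (-(Pm ε)) :=
      csInf_le hbdd ⟨-(Pm ε), hnegmem, rfl⟩
    have hε2 : (0:ℝ) < ε ^ 2 := by positivity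
    simp only [hTdef, hDdef]
    gcongr
  have htendD : Filter.Tendsto D (𝓝[>] (0:ℝ)) (𝓝 0) := Goal1.tendsto_div_nhds_zero
  rw [Filter.limsup_eq]
  have hmemS : ∀ c : ℝ, 0 < c → c ∈ {a : ℝ | ∀ᶠ ε in 𝓝[>] (0:ℝ), T ε ≤ a} := by
    intro c hc
    have hDle : ∀ᶠ ε in 𝓝[>] (0:ℝ), D ε < c := htendD.eventually_lt_const hc
    filter_upwards [hTD, hDle] with ε hh1 hh2
    exact hh1.trans hh2.le
  by_cases hbdd : BddBelow {a : ℝ | ∀ᶠ ε in 𝓝[>] (0:ℝ), T ε ≤ a}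
  · by_contra hpos
    push_neg at hpos
    set L := sInf {a : ℝ | ∀ᶠ ε in 𝓝[>] (0:ℝ), T ε ≤ a} with hL
    have := csInf_le hbdd (hmemS (L / 2) (by linarith))
    rw [← hL] at this
    linarith
  · rw [Real.sInf_of_not_bddBelow hbdd]

end MainProof


/-- Key expansion at maximizers: if `φ` is `C²` near `0` and `P_{ε,M} = (x_ε,y_ε,t_ε)`
maximizes `φ` on `B̄(0,ε)`, then
`φ(P_{ε,M}) + φ(−P_{ε,M}) = 2φ(0) + ⟨D²_ℍφ(0)(x_ε,y_ε),(x_ε,y_ε)⟩ + o(ε²)`, and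
consequently `max φ + min φ ≤ 2φ(0) + ⟨D²_ℍφ(0)(x_ε,y_ε),(x_ε,y_ε)⟩ + o(ε²)`. -/
theorem maximizer_taylor_pair (n : ℕ) (φ : Heis n → ℝ) (hφ : ContDiffAt ℝ 2 φ 0)
    (ε₀ : ℝ) (hε₀ : 0 < ε₀) (Pm : ℝ → Heis n)
    (hmem : ∀ ε ∈ Set.Ioo (0:ℝ) ε₀, Pm ε ∈ hClosedBall (hOne : Heis n) ε)
    (hmax : ∀ ε ∈ Set.Ioo (0:ℝ) ε₀, IsMaxOn φ (hClosedBall (hOne : Heis n) ε) (Pm ε)) :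
    ((fun ε : ℝ => φ (Pm ε) + φ (-(Pm ε)) - 2 * φ 0 - hQuad φ 0 (Pm ε).1 (Pm ε).2.1)
        =o[𝓝[>] (0:ℝ)] fun ε => ε ^ 2) ∧
    Filter.limsup
        (fun ε : ℝ => (φ (Pm ε) + sInf (φ '' hClosedBall (hOne : Heis n) ε)
            - 2 * φ 0 - hQuad φ 0 (Pm ε).1 (Pm ε).2.1) / ε ^ 2)
        (𝓝[>] (0:ℝ)) ≤ 0 := by
  exact MainProof.main n φ hφ ε₀ hε₀ Pm hmem hmax
end
end
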